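/- arXiv:2402.10383 — 3 statements merged into one kernel-verified Lean document; each statement's English description precedes it below -/
import Mathlib

section
/- Let T satisfy the sectorial-type hypotheses, n ∈ ℕ, and x ∈ X. Then for all t ≥ 1, K(t^{-n}, x) ≤ M₁·ψ_x(t) + M₂·t^{-n}·‖x‖ for constants M₁, M₂ ≥ 0 depending only on n and M, where K is the K-functional of the couple X, D(Tⁿ) and ψ_x is the resolvent quantity (‖TⁿQ_{te^{iω}}(T)^{−n/2}x‖ for n even; ‖T^{n+1}Q_{te^{iω}}(T)^{−(n+1)/2}x‖ + t‖TⁿQ_{te^{iω}}(T)^{−(n+1)/2}x‖ for n odd). -/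
noncomputable section

open MulOpposite

local notation "ℍ" => Quaternion ℝ

/-- The domain `D(Tⁿ)` of the `n`-th power of an operator `T` with domain `D`:
all `x` such that `x, Tx, …, T^{n-1}x ∈ D`. -/
def domN {X : Type*} [AddCommGroup X] [Module ℍᵐᵒᵖ X]
    (T : Module.End ℍᵐᵒᵖ X) (D : Set X) (n : ℕ) : Set X :=
  {x | ∀ j < n, (T ^ j) x ∈ D}

/-- The operator `Q_s(T) = T² − 2 Re(s) T + |s|²` for a quaternion `s`. -/
def Qs {X : Type*} [AddCommGroup X] [Module ℍᵐᵒᵖ X] [Module ℝ X]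
    [SMulCommClass ℍᵐᵒᵖ ℝ X] (T : Module.End ℍᵐᵒᵖ X) (s : ℍ) : Module.End ℍᵐᵒᵖ X :=
  T ^ 2 - (2 * s.re) • T + (‖s‖ ^ 2) • 1

/-- The operator `Q_{t e^{iω}}(T) = T² − 2 t cos(ω) T + t²` associated with the point
`t e^{iω}` of the ray `S_ω` (independent of the imaginary unit `i ∈ 𝕊`). -/
def Qray {X : Type*} [AddCommGroup X] [Module ℍᵐᵒᵖ X] [Module ℝ X]
    [SMulCommClass ℍᵐᵒᵖ ℝ X] (T : Module.End ℍᵐᵒᵖ X) (ω t : ℝ) : Module.End ℍᵐᵒᵖ X :=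
  T ^ 2 - (2 * t * Real.cos ω) • T + (t ^ 2) • 1

open MeasureTheory ENNReal

/-- The `K`-functional of the couple `X`, `D(Tⁿ)` (the latter with graph norm). -/
def KX {X : Type*} [NormedAddCommGroup X] [Module ℍᵐᵒᵖ X]
    (T : Module.End ℍᵐᵒᵖ X) (D : Set X) (n : ℕ) (t : ℝ) (x : X) : ℝ :=
  sInf {r | ∃ a b, x = a + b ∧ b ∈ domN T D n ∧ r = ‖a‖ + t * (‖b‖ + ‖(T ^ n) b‖)}

/-- The measure `dt/t` on `(0,∞)`. -/
def mustar : Measure ℝ :=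
  (volume.restrict (Set.Ioi (0:ℝ))).withDensity fun t => ENNReal.ofReal t⁻¹

/-- The resolvent quantity `ψ_x(t)` of the paper (`R t` playing the role of
`Q_{te^{iω}}(T)⁻¹`): `‖Tⁿ (R t)^{n/2} x‖` for even `n`, and
`‖T^{n+1} (R t)^{(n+1)/2} x‖ + t ‖Tⁿ (R t)^{(n+1)/2} x‖` for odd `n`. -/
def psi {X : Type*} [NormedAddCommGroup X] [Module ℍᵐᵒᵖ X]
    (T : Module.End ℍᵐᵒᵖ X) (R : ℝ → Module.End ℍᵐᵒᵖ X) (n : ℕ) (x : X) (t : ℝ) : ℝ :=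
  if Even n then ‖(T ^ n) (((R t) ^ (n / 2)) x)‖
  else ‖(T ^ (n + 1)) (((R t) ^ ((n + 1) / 2)) x)‖
    + t * ‖(T ^ n) (((R t) ^ ((n + 1) / 2)) x)‖


set_option linter.unusedSectionVars false
set_option maxHeartbeats 1000000

section Aux
variable {X : Type*} [NormedAddCommGroup X] [NormedSpace ℝ X]
    [Module ℍᵐᵒᵖ X] [SMulCommClass ℍᵐᵒᵖ ℝ X]
    (T : Module.End ℍᵐᵒᵖ X) (D : Submodule ℍᵐᵒᵖ X) (ω : ℝ)
    (R : ℝ → Module.End ℍᵐᵒᵖ X)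

lemma aux_smulD (hclosed : IsClosed {p : X × X | p.1 ∈ (D : Set X) ∧ T p.1 = p.2})
    {v : X} (hv : v ∈ D) (c : ℝ) : c • v ∈ D ∧ T (c • v) = c • T v := by
  have key : ∀ q : ℚ, ((q : ℝ) • v ∈ D ∧ T ((q : ℝ) • v) = (q : ℝ) • T v) := by
    intro q
    have h1 : (q : ℝ) • v = (q : ℍᵐᵒᵖ) • v := by
      have := map_ratCast_smul (AddMonoidHom.id X) ℝ ℍᵐᵒᵖ q v
      simpa using this
    have h2 : T ((q : ℝ) • v) = (q : ℝ) • T v :=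
      map_ratCast_smul T.toAddMonoidHom ℝ ℝ q v
    exact ⟨h1 ▸ D.smul_mem _ hv, h2⟩
  set g : ℝ → X × X := fun c => (c • v, c • T v) with hg
  have hgc : Continuous g :=
    Continuous.prodMk (continuous_id.smul continuous_const)
      (continuous_id.smul continuous_const)
  have hsub : Set.range (Rat.cast : ℚ → ℝ) ⊆
      g ⁻¹' {p : X × X | p.1 ∈ (D : Set X) ∧ T p.1 = p.2} := by
    rintro - ⟨q, rfl⟩; exact key q
  have : closure (Set.range (Rat.cast : ℚ → ℝ)) ⊆
      g ⁻¹' {p : X × X | p.1 ∈ (D : Set X) ∧ T p.1 = p.2} :=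
    closure_minimal hsub (hclosed.preimage hgc)
  have hc : c ∈ g ⁻¹' {p : X × X | p.1 ∈ (D : Set X) ∧ T p.1 = p.2} := by
    apply this; rw [Rat.denseRange_cast.closure_range]; trivial
  exact hc

lemma aux_Qray_apply (t : ℝ) (z : X) :
    Qray T ω t z = T (T z) - (2 * t * Real.cos ω) • T z + t ^ 2 • z := by
  simp only [Qray, LinearMap.add_apply, LinearMap.sub_apply, LinearMap.smul_apply,
    Module.End.one_apply, pow_two, Module.End.mul_apply]

lemma aux_T2R (hQR : ∀ t > 0, ∀ x : X, Qray T ω t (R t x) = x)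
    {t : ℝ} (ht : 0 < t) (y : X) :
    T (T (R t y)) = y + (2 * t * Real.cos ω) • T (R t y) - t ^ 2 • R t y := by
  have h := hQR t ht y
  rw [aux_Qray_apply] at h
  set z := R t y with hz
  rw [← h]; abel

lemma aux_Tpow_smul (hclosed : IsClosed {p : X × X | p.1 ∈ (D : Set X) ∧ T p.1 = p.2}) :
    ∀ (k : ℕ) (w : X), (∀ j < k, (T ^ j) w ∈ D) → ∀ c : ℝ,
      (T ^ k) (c • w) = c • (T ^ k) w := by
  intro k
  induction k with
  | zero => intro w _ c; simp only [pow_zero, Module.End.one_apply]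
  | succ k ih =>
    intro w hw c
    have h0 : w ∈ D := by
      have := hw 0 (Nat.succ_pos k)
      simpa only [pow_zero, Module.End.one_apply, SetLike.mem_coe] using this
    have hmem : ∀ j < k, (T ^ j) (T w) ∈ D := by
      intro j hj
      have := hw (j + 1) (by omega)
      rwa [pow_succ, Module.End.mul_apply] at this
    calc (T ^ (k + 1)) (c • w) = T ((T ^ k) (c • w)) := by
          rw [pow_succ', Module.End.mul_apply]
      _ = T (c • (T ^ k) w) := by rw [ih w (fun j hj => hw j (by omega)) c]
      _ = c • T ((T ^ k) w) := by
          refine (aux_smulD T D hclosed ?_ c).2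
          -- (T ^ k) w ∈ D
          have := hw k (by omega)
          exact this
      _ = c • (T ^ (k + 1)) w := by rw [pow_succ', Module.End.mul_apply]

lemma aux_mem (hclosed : IsClosed {p : X × X | p.1 ∈ (D : Set X) ∧ T p.1 = p.2})
    (hRdom : ∀ t > 0, ∀ x : X, R t x ∈ domN T (D : Set X) 2)
    (hQR : ∀ t > 0, ∀ x : X, Qray T ω t (R t x) = x) :
    ∀ {t : ℝ}, 0 < t → ∀ (m k : ℕ), k < 2 * m → ∀ x : X,
      (T ^ k) (((R t) ^ m) x) ∈ D := by
  intro t ht m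
  induction m with
  | zero => intro k hk; omega
  | succ m ihm =>
    intro k
    induction k using Nat.strong_induction_on with
    | _ k ihk =>
      intro hk x
      have hsplit : ((R t) ^ (m + 1)) x = R t (((R t) ^ m) x) := by
        rw [pow_succ', Module.End.mul_apply]
      match k, hk with
      | 0, _ =>
        rw [hsplit]
        have := (hRdom t ht (((R t) ^ m) x)) 0 (by omega)
        simpa only [pow_zero, Module.End.one_apply, SetLike.mem_coe] using this
      | 1, _ =>
        have := (hRdom t ht (((R t) ^ m) x)) 1 (by omega)
        rw [pow_one] at this ⊢
        rw [hsplit]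
        exact this
      | (k' + 2), hk =>
        have hrw : (T ^ (k' + 2)) (((R t) ^ (m + 1)) x)
            = (T ^ k') (T (T (R t (((R t) ^ m) x)))) := by
          rw [hsplit, pow_add, Module.End.mul_apply, pow_two, Module.End.mul_apply]
        rw [hrw, aux_T2R T ω R hQR ht]
        rw [map_sub, map_add]
        have hmem1 : ∀ j < k', (T ^ j) (T (R t (((R t) ^ m) x))) ∈ D := by
          intro j hj
          have : (T ^ (j + 1)) (((R t) ^ (m + 1)) x) ∈ D := ihk (j + 1) (by omega) (by omega) x
          rwa [pow_succ, Module.End.mul_apply, hsplit] at this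
        have hmem2 : ∀ j < k', (T ^ j) (R t (((R t) ^ m) x)) ∈ D := by
          intro j hj
          have : (T ^ j) (((R t) ^ (m + 1)) x) ∈ D := ihk j (by omega) (by omega) x
          rwa [hsplit] at this
        rw [aux_Tpow_smul T D hclosed k' _ hmem1, aux_Tpow_smul T D hclosed k' _ hmem2]
        refine D.sub_mem (D.add_mem ?_ ?_) ?_
        · exact ihm k' (by omega) x
        · refine (aux_smulD T D hclosed ?_ _).1
          have : (T ^ (k' + 1)) (((R t) ^ (m + 1)) x) ∈ D := ihk (k' + 1) (by omega) (by omega) x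
          rwa [pow_succ, Module.End.mul_apply, hsplit] at this
        · refine (aux_smulD T D hclosed ?_ _).1
          have : (T ^ k') (((R t) ^ (m + 1)) x) ∈ D := ihk k' (by omega) (by omega) x
          rwa [hsplit] at this

/-- Norm bound: `‖T^k (R^m x)‖ t^{2m} ≤ C ‖x‖ t^k` for `k ≤ 2m`, `t ≥ 1`. -/
lemma aux_norm (hclosed : IsClosed {p : X × X | p.1 ∈ (D : Set X) ∧ T p.1 = p.2})
    (hRdom : ∀ t > 0, ∀ x : X, R t x ∈ domN T (D : Set X) 2)
    (hQR : ∀ t > 0, ∀ x : X, Qray T ω t (R t x) = x)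
    (M : ℝ) (hM : 0 ≤ M)
    (hR1 : ∀ t > 0, ∀ x : X, ‖R t x‖ ≤ M / t ^ 2 * ‖x‖)
    (hR2 : ∀ t > 0, ∀ x : X, ‖T (R t x)‖ ≤ M / t * ‖x‖) :
    ∀ m k : ℕ, ∃ C : ℝ, 0 ≤ C ∧ (k ≤ 2 * m → ∀ t : ℝ, 1 ≤ t → ∀ x : X,
      ‖(T ^ k) (((R t) ^ m) x)‖ * t ^ (2 * m) ≤ C * (‖x‖ * t ^ k)) := by
  have hR1' : ∀ t : ℝ, 0 < t → ∀ x : X, ‖R t x‖ * t ^ 2 ≤ M * ‖x‖ := by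
    intro t ht x
    have h := hR1 t ht x
    calc ‖R t x‖ * t ^ 2 ≤ (M / t ^ 2 * ‖x‖) * t ^ 2 :=
          mul_le_mul_of_nonneg_right h (by positivity)
      _ = M * ‖x‖ := by field_simp
  have hR2' : ∀ t : ℝ, 0 < t → ∀ x : X, ‖T (R t x)‖ * t ≤ M * ‖x‖ := by
    intro t ht x
    have h := hR2 t ht x
    calc ‖T (R t x)‖ * t ≤ (M / t * ‖x‖) * t :=
          mul_le_mul_of_nonneg_right h (by positivity)
      _ = M * ‖x‖ := by field_simp
  intro m
  induction m with
  | zero =>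
    intro k
    refine ⟨1, zero_le_one, ?_⟩
    intro hk t ht x
    interval_cases k
    simp
  | succ m ihm =>
    intro k
    induction k using Nat.strong_induction_on with
    | _ k ihk =>
      match k with
      | 0 =>
        obtain ⟨C, hC0, hC⟩ := ihm 0
        refine ⟨M * C, by positivity, ?_⟩
        intro _ t ht x
        have ht0 : (0:ℝ) < t := lt_of_lt_of_le one_pos ht
        have hsplit : ((R t) ^ (m + 1)) x = R t (((R t) ^ m) x) := by
          rw [pow_succ', Module.End.mul_apply]
        have h1 := hR1' t ht0 (((R t) ^ m) x)
        have h2 := hC (by omega) t ht x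
        simp only [pow_zero, Module.End.one_apply] at h2 ⊢
        calc ‖((R t) ^ (m + 1)) x‖ * t ^ (2 * (m + 1))
            = (‖R t (((R t) ^ m) x)‖ * t ^ 2) * t ^ (2 * m) := by rw [hsplit]; ring
          _ ≤ (M * ‖((R t) ^ m) x‖) * t ^ (2 * m) :=
              mul_le_mul_of_nonneg_right h1 (by positivity)
          _ = M * (‖((R t) ^ m) x‖ * t ^ (2 * m)) := by ring
          _ ≤ M * (C * (‖x‖ * 1)) := mul_le_mul_of_nonneg_left h2 hM
          _ = M * C * (‖x‖ * 1) := by ring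
      | 1 =>
        obtain ⟨C, hC0, hC⟩ := ihm 0
        refine ⟨M * C, by positivity, ?_⟩
        intro _ t ht x
        have ht0 : (0:ℝ) < t := lt_of_lt_of_le one_pos ht
        have hsplit : ((R t) ^ (m + 1)) x = R t (((R t) ^ m) x) := by
          rw [pow_succ', Module.End.mul_apply]
        have h1 := hR2' t ht0 (((R t) ^ m) x)
        have h2 := hC (by omega) t ht x
        simp only [pow_zero, Module.End.one_apply, pow_one] at h2 ⊢
        calc ‖T (((R t) ^ (m + 1)) x)‖ * t ^ (2 * (m + 1))
            = ((‖T (R t (((R t) ^ m) x))‖ * t) * t ^ (2 * m)) * t := by rw [hsplit]; ring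
          _ ≤ ((M * ‖((R t) ^ m) x‖) * t ^ (2 * m)) * t :=
              mul_le_mul_of_nonneg_right
                (mul_le_mul_of_nonneg_right h1 (by positivity)) ht0.le
          _ = (‖((R t) ^ m) x‖ * t ^ (2 * m)) * (M * t) := by ring
          _ ≤ (C * (‖x‖ * 1)) * (M * t) := mul_le_mul_of_nonneg_right h2 (by positivity)
          _ = M * C * (‖x‖ * t) := by ring
      | (k' + 2) =>
        obtain ⟨C1, hC10, hC1⟩ := ihm k'
        obtain ⟨C2, hC20, hC2⟩ := ihk (k' + 1) (by omega)
        obtain ⟨C3, hC30, hC3⟩ := ihk k' (by omega)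
        refine ⟨C1 + 2 * C2 + C3, by positivity, ?_⟩
        intro hk t ht x
        have ht0 : (0:ℝ) < t := lt_of_lt_of_le one_pos ht
        have hsplit : ((R t) ^ (m + 1)) x = R t (((R t) ^ m) x) := by
          rw [pow_succ', Module.End.mul_apply]
        have hrw : (T ^ (k' + 2)) (((R t) ^ (m + 1)) x)
            = (T ^ k') (T (T (R t (((R t) ^ m) x)))) := by
          rw [hsplit, pow_add, Module.End.mul_apply, pow_two, Module.End.mul_apply]
        have hmem1 : ∀ j < k', (T ^ j) (T (R t (((R t) ^ m) x))) ∈ D := by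
          intro j hj
          have : (T ^ (j + 1)) (((R t) ^ (m + 1)) x) ∈ D :=
            aux_mem T D ω R hclosed hRdom hQR ht0 (m+1) (j+1) (by omega) x
          rwa [pow_succ, Module.End.mul_apply, hsplit] at this
        have hmem2 : ∀ j < k', (T ^ j) (R t (((R t) ^ m) x)) ∈ D := by
          intro j hj
          have : (T ^ j) (((R t) ^ (m + 1)) x) ∈ D :=
            aux_mem T D ω R hclosed hRdom hQR ht0 (m+1) j (by omega) x
          rwa [hsplit] at this
        have hexp : (T ^ (k' + 2)) (((R t) ^ (m + 1)) x)
            = (T ^ k') (((R t) ^ m) x)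
              + (2 * t * Real.cos ω) • (T ^ (k' + 1)) (((R t) ^ (m + 1)) x)
              - t ^ 2 • (T ^ k') (((R t) ^ (m + 1)) x) := by
          rw [hrw, aux_T2R T ω R hQR ht0, map_sub, map_add,
            aux_Tpow_smul T D hclosed k' _ hmem1, aux_Tpow_smul T D hclosed k' _ hmem2]
          congr 2
          · rw [pow_succ, Module.End.mul_apply, hsplit]
          · rw [hsplit]
        set A := (T ^ k') (((R t) ^ m) x)
        set B := (T ^ (k' + 1)) (((R t) ^ (m + 1)) x)
        set E := (T ^ k') (((R t) ^ (m + 1)) x)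
        have htri : ‖(T ^ (k' + 2)) (((R t) ^ (m + 1)) x)‖
            ≤ ‖A‖ + (2 * t) * ‖B‖ + t ^ 2 * ‖E‖ := by
          rw [hexp]
          have hb : ‖(2 * t * Real.cos ω) • B‖ ≤ (2 * t) * ‖B‖ := by
            rw [norm_smul]
            have h1 : |2 * t * Real.cos ω| ≤ 2 * t := by
              rw [abs_mul, abs_of_pos (by linarith : (0:ℝ) < 2 * t)]
              nlinarith [Real.abs_cos_le_one ω, norm_nonneg B]
            exact mul_le_mul_of_nonneg_right h1 (norm_nonneg B)
          have he : ‖t ^ 2 • E‖ = t ^ 2 * ‖E‖ := by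
            rw [norm_smul, Real.norm_eq_abs, abs_of_nonneg (by positivity : (0:ℝ) ≤ t ^ 2)]
          calc ‖A + (2 * t * Real.cos ω) • B - t ^ 2 • E‖
              ≤ ‖A + (2 * t * Real.cos ω) • B‖ + ‖t ^ 2 • E‖ := norm_sub_le _ _
            _ ≤ ‖A‖ + ‖(2 * t * Real.cos ω) • B‖ + ‖t ^ 2 • E‖ := by
                have := norm_add_le A ((2 * t * Real.cos ω) • B)
                linarith
            _ ≤ ‖A‖ + (2 * t) * ‖B‖ + t ^ 2 * ‖E‖ := by rw [he]; linarith
        have h1 := hC1 (by omega) t ht x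
        have h2 := hC2 (by omega) t ht x
        have h3 := hC3 (by omega) t ht x
        have e1 : ‖A‖ * t ^ (2 * (m + 1)) ≤ C1 * (‖x‖ * t ^ (k' + 2)) := by
          calc ‖A‖ * t ^ (2 * (m + 1)) = (‖A‖ * t ^ (2 * m)) * t ^ 2 := by ring
            _ ≤ (C1 * (‖x‖ * t ^ k')) * t ^ 2 :=
                mul_le_mul_of_nonneg_right h1 (by positivity)
            _ = C1 * (‖x‖ * t ^ (k' + 2)) := by ring
        have e2 : ((2 * t) * ‖B‖) * t ^ (2 * (m + 1)) ≤ 2 * C2 * (‖x‖ * t ^ (k' + 2)) := by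
          calc ((2 * t) * ‖B‖) * t ^ (2 * (m + 1))
              = (‖B‖ * t ^ (2 * (m + 1))) * (2 * t) := by ring
            _ ≤ (C2 * (‖x‖ * t ^ (k' + 1))) * (2 * t) :=
                mul_le_mul_of_nonneg_right h2 (by positivity)
            _ = 2 * C2 * (‖x‖ * t ^ (k' + 2)) := by ring
        have e3 : (t ^ 2 * ‖E‖) * t ^ (2 * (m + 1)) ≤ C3 * (‖x‖ * t ^ (k' + 2)) := by
          calc (t ^ 2 * ‖E‖) * t ^ (2 * (m + 1))
              = (‖E‖ * t ^ (2 * (m + 1))) * t ^ 2 := by ring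
            _ ≤ (C3 * (‖x‖ * t ^ k')) * t ^ 2 :=
                mul_le_mul_of_nonneg_right h3 (by positivity)
            _ = C3 * (‖x‖ * t ^ (k' + 2)) := by ring
        calc ‖(T ^ (k' + 2)) (((R t) ^ (m + 1)) x)‖ * t ^ (2 * (m + 1))
            ≤ (‖A‖ + (2 * t) * ‖B‖ + t ^ 2 * ‖E‖) * t ^ (2 * (m + 1)) :=
              mul_le_mul_of_nonneg_right htri (by positivity)
          _ = ‖A‖ * t ^ (2 * (m + 1)) + ((2 * t) * ‖B‖) * t ^ (2 * (m + 1))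
              + (t ^ 2 * ‖E‖) * t ^ (2 * (m + 1)) := by ring
          _ ≤ C1 * (‖x‖ * t ^ (k' + 2)) + 2 * C2 * (‖x‖ * t ^ (k' + 2))
              + C3 * (‖x‖ * t ^ (k' + 2)) := by linarith
          _ = (C1 + 2 * C2 + C3) * (‖x‖ * t ^ (k' + 2)) := by ring

lemma aux_Rsmul (hclosed : IsClosed {p : X × X | p.1 ∈ (D : Set X) ∧ T p.1 = p.2})
    (hRdom : ∀ t > 0, ∀ x : X, R t x ∈ domN T (D : Set X) 2)
    (hQR : ∀ t > 0, ∀ x : X, Qray T ω t (R t x) = x)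
    (hRQ : ∀ t > 0, ∀ x ∈ domN T (D : Set X) 2, R t (Qray T ω t x) = x)
    {t : ℝ} (ht : 0 < t) (c : ℝ) (v : X) : R t (c • v) = c • R t v := by
  have hRv : R t v ∈ D := by
    have := (hRdom t ht v) 0 (by omega); simpa only [pow_zero, Module.End.one_apply, SetLike.mem_coe] using this
  have hTRv : T (R t v) ∈ D := by
    have := (hRdom t ht v) 1 (by omega); simpa only [pow_one, SetLike.mem_coe] using this
  set a := 2 * t * Real.cos ω with ha
  have hQc : Qray T ω t (c • R t v) = c • v := by
    rw [aux_Qray_apply]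
    rw [(aux_smulD T D hclosed hRv c).2, (aux_smulD T D hclosed hTRv c).2]
    rw [smul_comm a c, smul_comm (t ^ 2) c]
    rw [← smul_sub, ← smul_add]
    have := hQR t ht v
    rw [aux_Qray_apply] at this
    rw [this]
  set u := R t (c • v) - c • R t v with hu
  have hmem : u ∈ domN T (D : Set X) 2 := by
    intro j hj
    interval_cases j
    · simp only [pow_zero, Module.End.one_apply]
      refine D.sub_mem ?_ ((aux_smulD T D hclosed hRv c).1)
      have := (hRdom t ht (c • v)) 0 (by omega)
      simpa only [pow_zero, Module.End.one_apply, SetLike.mem_coe] using this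
    · simp only [pow_one, hu, map_sub]
      refine D.sub_mem ?_ ?_
      · have := (hRdom t ht (c • v)) 1 (by omega)
        simpa only [pow_one, SetLike.mem_coe] using this
      · rw [(aux_smulD T D hclosed hRv c).2]
        exact (aux_smulD T D hclosed hTRv c).1
  have hQu : Qray T ω t u = 0 := by
    rw [hu, map_sub, hQc, hQR t ht (c • v), sub_self]
  have := hRQ t ht u hmem
  rw [hQu, map_zero] at this
  have h0 : u = 0 := this.symm
  have : R t (c • v) = c • R t v := by
    have := sub_eq_zero.mp h0
    exact this
  exact this

lemma aux_comm (hclosed : IsClosed {p : X × X | p.1 ∈ (D : Set X) ∧ T p.1 = p.2})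
    (hRdom : ∀ t > 0, ∀ x : X, R t x ∈ domN T (D : Set X) 2)
    (hQR : ∀ t > 0, ∀ x : X, Qray T ω t (R t x) = x)
    (hRQ : ∀ t > 0, ∀ x ∈ domN T (D : Set X) 2, R t (Qray T ω t x) = x)
    {t : ℝ} (ht : 0 < t) {w : X} (hw : w ∈ D) : T (R t w) = R t (T w) := by
  have hRw : R t w ∈ D := by
    have := (hRdom t ht w) 0 (by omega); simpa only [pow_zero, Module.End.one_apply, SetLike.mem_coe] using this
  have hTRw : T (R t w) ∈ D := by
    have := (hRdom t ht w) 1 (by omega); simpa only [pow_one, SetLike.mem_coe] using this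
  set a := 2 * t * Real.cos ω with ha
  have hQT : Qray T ω t (T (R t w)) = T w := by
    have hexp := hQR t ht w
    rw [aux_Qray_apply] at hexp
    rw [aux_Qray_apply]
    calc T (T (T (R t w))) - a • T (T (R t w)) + t ^ 2 • T (R t w)
        = T (T (T (R t w))) - T (a • T (R t w)) + T (t ^ 2 • R t w) := by
          rw [(aux_smulD T D hclosed hTRw a).2, (aux_smulD T D hclosed hRw (t ^ 2)).2]
      _ = T (T (T (R t w)) - a • T (R t w) + t ^ 2 • R t w) := by
          rw [map_add, map_sub]
      _ = T w := by rw [hexp]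
  set u := T (R t w) - R t (T w) with hu
  have hmem : u ∈ domN T (D : Set X) 2 := by
    intro j hj
    interval_cases j
    · simp only [pow_zero, Module.End.one_apply]
      refine D.sub_mem hTRw ?_
      have := (hRdom t ht (T w)) 0 (by omega)
      simpa only [pow_zero, Module.End.one_apply, SetLike.mem_coe] using this
    · simp only [pow_one, hu, map_sub]
      refine D.sub_mem ?_ ?_
      · rw [aux_T2R T ω R hQR ht w]
        exact D.sub_mem (D.add_mem hw ((aux_smulD T D hclosed hTRw a).1))
          ((aux_smulD T D hclosed hRw (t ^ 2)).1)
      · have := (hRdom t ht (T w)) 1 (by omega)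
        simpa only [pow_one, SetLike.mem_coe] using this
  have hQu : Qray T ω t u = 0 := by
    rw [hu, map_sub, hQT, hQR t ht (T w), sub_self]
  have := hRQ t ht u hmem
  rw [hQu, map_zero] at this
  exact sub_eq_zero.mp this.symm

lemma aux_commPow1 (hclosed : IsClosed {p : X × X | p.1 ∈ (D : Set X) ∧ T p.1 = p.2})
    (hRdom : ∀ t > 0, ∀ x : X, R t x ∈ domN T (D : Set X) 2)
    (hQR : ∀ t > 0, ∀ x : X, Qray T ω t (R t x) = x)
    (hRQ : ∀ t > 0, ∀ x ∈ domN T (D : Set X) 2, R t (Qray T ω t x) = x)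
    {t : ℝ} (ht : 0 < t) : ∀ (j : ℕ) {w : X}, w ∈ D →
      T (((R t) ^ j) w) = ((R t) ^ j) (T w) := by
  intro j
  induction j with
  | zero => intro w _; simp only [pow_zero, Module.End.one_apply]
  | succ j ih =>
    intro w hw
    have hRw : R t w ∈ D := by
      have := (hRdom t ht w) 0 (by omega); simpa only [pow_zero, Module.End.one_apply, SetLike.mem_coe] using this
    calc T (((R t) ^ (j + 1)) w) = T (((R t) ^ j) (R t w)) := by
          rw [pow_succ, Module.End.mul_apply]
      _ = ((R t) ^ j) (T (R t w)) := ih hRw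
      _ = ((R t) ^ j) (R t (T w)) := by
          rw [aux_comm T D ω R hclosed hRdom hQR hRQ ht hw]
      _ = ((R t) ^ (j + 1)) (T w) := by rw [pow_succ, Module.End.mul_apply]

lemma aux_commPow (hclosed : IsClosed {p : X × X | p.1 ∈ (D : Set X) ∧ T p.1 = p.2})
    (hRdom : ∀ t > 0, ∀ x : X, R t x ∈ domN T (D : Set X) 2)
    (hQR : ∀ t > 0, ∀ x : X, Qray T ω t (R t x) = x)
    (hRQ : ∀ t > 0, ∀ x ∈ domN T (D : Set X) 2, R t (Qray T ω t x) = x)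
    {t : ℝ} (ht : 0 < t) : ∀ (i j : ℕ) (x : X), (∀ l < i, (T ^ l) x ∈ D) →
      (T ^ i) (((R t) ^ j) x) = ((R t) ^ j) ((T ^ i) x) := by
  intro i
  induction i with
  | zero => intro j x _; simp only [pow_zero, Module.End.one_apply]
  | succ i ih =>
    intro j x hx
    calc (T ^ (i + 1)) (((R t) ^ j) x) = T ((T ^ i) (((R t) ^ j) x)) := by
          rw [pow_succ', Module.End.mul_apply]
      _ = T (((R t) ^ j) ((T ^ i) x)) := by rw [ih j x (fun l hl => hx l (by omega))]
      _ = ((R t) ^ j) (T ((T ^ i) x)) :=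
          aux_commPow1 T D ω R hclosed hRdom hQR hRQ ht j (hx i (by omega))
      _ = ((R t) ^ j) ((T ^ (i + 1)) x) := by rw [pow_succ', Module.End.mul_apply]

/-- Trinomial decomposition: `x = Σ_{p ≤ 2ν} d_p • T^p (R^ν x)` with `|d_p| ≤ K t^{2ν-p}`. -/
lemma aux_decomp (hclosed : IsClosed {p : X × X | p.1 ∈ (D : Set X) ∧ T p.1 = p.2})
    (hRdom : ∀ t > 0, ∀ x : X, R t x ∈ domN T (D : Set X) 2)
    (hQR : ∀ t > 0, ∀ x : X, Qray T ω t (R t x) = x) :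
    ∀ ν : ℕ, ∃ K : ℝ, 0 ≤ K ∧ ∀ t : ℝ, 1 ≤ t → ∀ x : X, ∃ d : ℕ → ℝ,
      (∀ p, |d p| * t ^ p ≤ K * t ^ (2 * ν)) ∧
      (∀ p, 2 * ν < p → d p = 0) ∧
      x = ∑ p ∈ Finset.range (2 * ν + 1), d p • (T ^ p) (((R t) ^ ν) x) := by
  intro ν
  induction ν with
  | zero =>
    refine ⟨1, zero_le_one, ?_⟩
    intro t ht x
    refine ⟨fun p => if p = 0 then 1 else 0, ?_, ?_, ?_⟩
    · intro p
      by_cases hp : p = 0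
      · subst hp; simp
      · simp only [if_neg hp, abs_zero, zero_mul]
        positivity
    · intro p hp
      show (if p = 0 then (1:ℝ) else 0) = 0
      rw [if_neg (by omega)]
    · simp
  | succ ν ihn =>
    obtain ⟨K, hK0, hK⟩ := ihn
    refine ⟨4 * K, by positivity, ?_⟩
    intro t ht x
    have ht0 : (0:ℝ) < t := lt_of_lt_of_le one_pos ht
    obtain ⟨d, hb, hvan, hsum⟩ := hK t ht x
    set a := 2 * t * Real.cos ω with ha
    set d' : ℕ → ℝ := fun p =>
      (if 2 ≤ p then d (p - 2) else 0) - a * (if 1 ≤ p then d (p - 1) else 0) + t ^ 2 * d p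
      with hd'
    have habs_a : |a| ≤ 2 * t := by
      rw [ha, abs_mul, abs_of_pos (by linarith : (0:ℝ) < 2 * t)]
      nlinarith [Real.abs_cos_le_one ω]
    refine ⟨d', ?_, ?_, ?_⟩
    · -- coefficient bounds
      intro p
      have h1 : |(if 2 ≤ p then d (p - 2) else 0)| * t ^ p ≤ K * (t ^ (2 * ν) * t ^ 2) := by
        by_cases hp : 2 ≤ p
        · obtain ⟨q, rfl⟩ : ∃ q, p = q + 2 := ⟨p - 2, by omega⟩
          rw [if_pos hp, Nat.add_sub_cancel]
          calc |d q| * t ^ (q + 2) = (|d q| * t ^ q) * t ^ 2 := by ring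
            _ ≤ (K * t ^ (2 * ν)) * t ^ 2 :=
                mul_le_mul_of_nonneg_right (hb q) (by positivity)
            _ = K * (t ^ (2 * ν) * t ^ 2) := by ring
        · rw [if_neg hp]; simp only [abs_zero, zero_mul]; positivity
      have h2 : |a * (if 1 ≤ p then d (p - 1) else 0)| * t ^ p
          ≤ 2 * (K * (t ^ (2 * ν) * t ^ 2)) := by
        by_cases hp : 1 ≤ p
        · obtain ⟨q, rfl⟩ : ∃ q, p = q + 1 := ⟨p - 1, by omega⟩
          rw [if_pos hp, Nat.add_sub_cancel, abs_mul]
          calc |a| * |d q| * t ^ (q + 1) = (|a| * t) * (|d q| * t ^ q) := by ring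
            _ ≤ (2 * t * t) * (K * t ^ (2 * ν)) := by
                refine mul_le_mul ?_ (hb q) (by positivity) (by positivity)
                exact mul_le_mul_of_nonneg_right habs_a ht0.le
            _ = 2 * (K * (t ^ (2 * ν) * t ^ 2)) := by ring
        · rw [if_neg hp]; simp only [mul_zero, abs_zero, zero_mul]; positivity
      have h3 : |t ^ 2 * d p| * t ^ p ≤ K * (t ^ (2 * ν) * t ^ 2) := by
        rw [abs_mul, abs_of_nonneg (by positivity : (0:ℝ) ≤ t ^ 2)]
        calc t ^ 2 * |d p| * t ^ p = (|d p| * t ^ p) * t ^ 2 := by ring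
          _ ≤ (K * t ^ (2 * ν)) * t ^ 2 :=
              mul_le_mul_of_nonneg_right (hb p) (by positivity)
          _ = K * (t ^ (2 * ν) * t ^ 2) := by ring
      have habs : |d' p| ≤ |(if 2 ≤ p then d (p - 2) else 0)|
          + |a * (if 1 ≤ p then d (p - 1) else 0)| + |t ^ 2 * d p| := by
        calc |d' p| = |(if 2 ≤ p then d (p - 2) else 0)
              + -(a * (if 1 ≤ p then d (p - 1) else 0)) + t ^ 2 * d p| := by
              rw [hd']; simp only [sub_eq_add_neg]
          _ ≤ |(if 2 ≤ p then d (p - 2) else 0)| + |-(a * (if 1 ≤ p then d (p - 1) else 0))|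
              + |t ^ 2 * d p| := abs_add_three _ _ _
          _ = _ := by rw [abs_neg]
      calc |d' p| * t ^ p ≤ (|(if 2 ≤ p then d (p - 2) else 0)|
            + |a * (if 1 ≤ p then d (p - 1) else 0)| + |t ^ 2 * d p|) * t ^ p :=
            mul_le_mul_of_nonneg_right habs (by positivity)
        _ = |(if 2 ≤ p then d (p - 2) else 0)| * t ^ p
            + |a * (if 1 ≤ p then d (p - 1) else 0)| * t ^ p + |t ^ 2 * d p| * t ^ p := by ring
        _ ≤ K * (t ^ (2 * ν) * t ^ 2) + 2 * (K * (t ^ (2 * ν) * t ^ 2))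
            + K * (t ^ (2 * ν) * t ^ 2) := by linarith
        _ = 4 * K * t ^ (2 * (ν + 1)) := by ring
    · -- vanishing
      intro p hp
      have e1 : d (p - 2) = 0 := hvan _ (by omega)
      have e2 : d (p - 1) = 0 := hvan _ (by omega)
      have e3 : d p = 0 := hvan _ (by omega)
      simp [hd', e1, e2, e3]
    · -- the identity
      set v := ((R t) ^ (ν + 1)) x with hvdef
      set y := ((R t) ^ ν) x with hydef
      have hv' : v = R t y := by rw [hvdef, hydef, pow_succ', Module.End.mul_apply]
      have hy : y = T (T v) - a • T v + t ^ 2 • v := by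
        conv_lhs => rw [← hQR t ht0 y]
        rw [aux_Qray_apply, ← hv']
      have hterm : ∀ p, p ≤ 2 * ν →
          (T ^ p) y = (T ^ (p + 2)) v - a • (T ^ (p + 1)) v + t ^ 2 • (T ^ p) v := by
        intro p hp
        have hmemTv : ∀ j < p, (T ^ j) (T v) ∈ D := by
          intro j hj
          have : (T ^ (j + 1)) v ∈ D :=
            aux_mem T D ω R hclosed hRdom hQR ht0 (ν + 1) (j + 1) (by omega) x
          rwa [pow_succ, Module.End.mul_apply] at this
        have hmemv : ∀ j < p, (T ^ j) v ∈ D := fun j hj =>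
          aux_mem T D ω R hclosed hRdom hQR ht0 (ν + 1) j (by omega) x
        have e1 : (T ^ p) (T (T v)) = (T ^ (p + 2)) v := by
          rw [pow_add, Module.End.mul_apply, pow_two, Module.End.mul_apply]
        have e2 : (T ^ p) (a • T v) = a • (T ^ (p + 1)) v := by
          rw [aux_Tpow_smul T D hclosed p _ hmemTv, pow_succ, Module.End.mul_apply]
        have e3 : (T ^ p) (t ^ 2 • v) = t ^ 2 • (T ^ p) v :=
          aux_Tpow_smul T D hclosed p _ hmemv _
        rw [hy, map_add, map_sub, e1, e2, e3]
      have step1 : x = ∑ p ∈ Finset.range (2 * ν + 1),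
          (d p • (T ^ (p + 2)) v - (a * d p) • (T ^ (p + 1)) v
            + (t ^ 2 * d p) • (T ^ p) v) := by
        rw [hsum]
        refine Finset.sum_congr rfl ?_
        intro p hp
        rw [Finset.mem_range] at hp
        rw [hterm p (by omega), smul_add, smul_sub, smul_smul, smul_smul,
          mul_comm (d p) a, mul_comm (d p) (t ^ 2)]
      have step2 : x = ∑ p ∈ Finset.range (2 * ν + 1), d p • (T ^ (p + 2)) v
          - ∑ p ∈ Finset.range (2 * ν + 1), (a * d p) • (T ^ (p + 1)) v
          + ∑ p ∈ Finset.range (2 * ν + 1), (t ^ 2 * d p) • (T ^ p) v := by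
        rw [step1, Finset.sum_add_distrib, Finset.sum_sub_distrib]
      have hS1 : ∑ p ∈ Finset.range (2 * ν + 2 + 1),
          (if 2 ≤ p then d (p - 2) else 0) • (T ^ p) v
          = ∑ p ∈ Finset.range (2 * ν + 1), d p • (T ^ (p + 2)) v := by
        rw [Finset.sum_range_succ' _ (2 * ν + 2), Finset.sum_range_succ' _ (2 * ν + 1)]
        rw [if_neg (by omega : ¬ (2:ℕ) ≤ 0), if_neg (by omega : ¬ (2:ℕ) ≤ 0 + 1)]
        simp only [zero_smul, add_zero]
        refine Finset.sum_congr rfl ?_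
        intro p hp
        rw [if_pos (by omega), show p + 1 + 1 - 2 = p from by omega,
          show p + 1 + 1 = p + 2 from by omega]
      have hS2 : ∑ p ∈ Finset.range (2 * ν + 2 + 1),
          (a * (if 1 ≤ p then d (p - 1) else 0)) • (T ^ p) v
          = ∑ p ∈ Finset.range (2 * ν + 1), (a * d p) • (T ^ (p + 1)) v := by
        rw [Finset.sum_range_succ' _ (2 * ν + 2)]
        rw [if_neg (by omega : ¬ (1:ℕ) ≤ 0)]
        simp only [mul_zero, zero_smul, add_zero]
        rw [Finset.sum_range_succ]
        rw [if_pos (by omega : (1:ℕ) ≤ 2 * ν + 1 + 1), hvan (2 * ν + 1 + 1 - 1) (by omega)]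
        simp only [mul_zero, zero_smul, add_zero]
        refine Finset.sum_congr rfl ?_
        intro p hp
        rw [if_pos (by omega), show p + 1 - 1 = p from by omega]
      have hS3 : ∑ p ∈ Finset.range (2 * ν + 2 + 1), (t ^ 2 * d p) • (T ^ p) v
          = ∑ p ∈ Finset.range (2 * ν + 1), (t ^ 2 * d p) • (T ^ p) v := by
        rw [Finset.sum_range_succ, Finset.sum_range_succ]
        rw [hvan (2 * ν + 1) (by omega), hvan (2 * ν + 2) (by omega)]
        simp only [mul_zero, zero_smul, add_zero]
      have hfin : ∑ p ∈ Finset.range (2 * (ν + 1) + 1), d' p • (T ^ p) v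
          = ∑ p ∈ Finset.range (2 * ν + 2 + 1),
            ((if 2 ≤ p then d (p - 2) else 0) • (T ^ p) v
              - (a * (if 1 ≤ p then d (p - 1) else 0)) • (T ^ p) v
              + (t ^ 2 * d p) • (T ^ p) v) := by
        rw [show 2 * (ν + 1) + 1 = 2 * ν + 2 + 1 from by ring]
        refine Finset.sum_congr rfl ?_
        intro p hp
        rw [hd']
        simp only [sub_smul, add_smul]
      rw [hfin, Finset.sum_add_distrib, Finset.sum_sub_distrib, hS1, hS2, hS3, ← step2]

end Aux

/-- the upper bound `K(t^{-n},x) ≤ M₁ ψ_x(t) + M₂ t^{-n} ‖x‖` for `t ≥ 1`,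
where `K` is the `K`-functional of the couple `X, D(Tⁿ)`. -/
theorem K_le_psi
    {X : Type*} [NormedAddCommGroup X] [NormedSpace ℝ X] [CompleteSpace X]
    [Module ℍᵐᵒᵖ X] [SMulCommClass ℍᵐᵒᵖ ℝ X]
    -- right Banach space: `‖x·s‖ = ‖x‖·|s|`
    (hnorm : ∀ (x : X) (s : ℍ), ‖(op s) • x‖ = ‖x‖ * ‖s‖)
    -- `T` is a closed right linear operator with domain `D`
    (T : Module.End ℍᵐᵒᵖ X) (D : Submodule ℍᵐᵒᵖ X)
    (hclosed : IsClosed {p : X × X | p.1 ∈ (D : Set X) ∧ T p.1 = p.2})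
    -- the ray `S_ω` lies in the S-resolvent set, with pseudo-resolvents `R t = Q_{te^{iω}}(T)⁻¹`
    (ω : ℝ) (hω : ω ∈ Set.Icc (0:ℝ) Real.pi)
    (M : ℝ) (hM : 0 ≤ M)
    (R : ℝ → Module.End ℍᵐᵒᵖ X)
    (hRcont : ∀ t > 0, Continuous (R t))
    (hRdom : ∀ t > 0, ∀ x : X, R t x ∈ domN T (D : Set X) 2)
    (hQR : ∀ t > 0, ∀ x : X, Qray T ω t (R t x) = x)
    (hRQ : ∀ t > 0, ∀ x ∈ domN T (D : Set X) 2, R t (Qray T ω t x) = x)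
    -- the resolvent bounds `‖Q_s⁻¹‖ ≤ M/|s|²` and `‖T Q_s⁻¹‖ ≤ M/|s|` on `S_ω`
    (hR1 : ∀ t > 0, ∀ x : X, ‖R t x‖ ≤ M / t ^ 2 * ‖x‖)
    (hR2 : ∀ t > 0, ∀ x : X, ‖T (R t x)‖ ≤ M / t * ‖x‖)
    (n : ℕ) (hn : 0 < n) :
    ∃ M₁ M₂ : ℝ, 0 ≤ M₁ ∧ 0 ≤ M₂ ∧ ∀ x : X, ∀ t ≥ (1:ℝ),
      KX T (D : Set X) n (t ^ (-(n : ℝ))) x ≤ M₁ * psi T R n x t + M₂ * ‖x‖ / t ^ n := by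
  obtain ⟨K, hK0, hK⟩ := aux_decomp T D ω R hclosed hRdom hQR n
  choose C hC0 hC using aux_norm T D ω R hclosed hRdom hQR M hM hR1 hR2
  rcases Nat.even_or_odd n with he | ho
  · -- EVEN CASE
    obtain ⟨m, hm⟩ := he
    refine ⟨(∑ k ∈ Finset.range n, K * C m (k+1)) + (∑ p ∈ Finset.range (n+1), K * C m p),
        ∑ p ∈ Finset.range (n+1), K * C n p,
        add_nonneg (Finset.sum_nonneg fun i _ => mul_nonneg hK0 (hC0 _ _))
          (Finset.sum_nonneg fun i _ => mul_nonneg hK0 (hC0 _ _)),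
        Finset.sum_nonneg fun i _ => mul_nonneg hK0 (hC0 _ _), ?_⟩
    intro x t ht
    have ht0 : (0:ℝ) < t := lt_of_lt_of_le one_pos ht
    have htn : (0:ℝ) < t ^ n := pow_pos ht0 n
    obtain ⟨d, hb, hvan, hsum⟩ := hK t ht x
    set w : X := ((R t) ^ n) x with hw
    set z : X := (T ^ n) (((R t) ^ m) x) with hz
    have hTnw : (T ^ n) w = ((R t) ^ m) z := by
      have h1 : w = ((R t) ^ m) (((R t) ^ m) x) := by
        rw [hw, show n = m + m from hm, pow_add, Module.End.mul_apply]
      rw [h1, aux_commPow T D ω R hclosed hRdom hQR hRQ ht0 n m (((R t) ^ m) x)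
        (fun l hl => aux_mem T D ω R hclosed hRdom hQR ht0 m l (by omega) x), ← hz]
    have hTnp : ∀ p : ℕ, (T ^ (n + p)) w = (T ^ p) (((R t) ^ m) z) := by
      intro p
      rw [show n + p = p + n from by omega, pow_add, Module.End.mul_apply, hTnw]
    set bb : X := ∑ p ∈ Finset.range (n+1), d p • (T ^ p) w with hbb
    set aa : X := ∑ k ∈ Finset.range n, d (n+1+k) • (T ^ (n+1+k)) w with haa
    have hx : x = aa + bb := by
      have h1 : ∑ p ∈ Finset.range (2*n+1), d p • (T ^ p) w
          = bb + ∑ p ∈ Finset.Ico (n+1) (2*n+1), d p • (T ^ p) w := by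
        rw [hbb, Finset.range_eq_Ico, Finset.range_eq_Ico,
          Finset.sum_Ico_consecutive _ (by omega) (by omega)]
      have h2 : ∑ p ∈ Finset.Ico (n+1) (2*n+1), d p • (T ^ p) w = aa := by
        rw [haa, Finset.sum_Ico_eq_sum_range, show 2*n+1 - (n+1) = n from by omega]
      rw [hsum, h1, h2, add_comm]
    have hmembb : bb ∈ domN T (D : Set X) n := by
      intro j hj
      rw [hbb, map_sum]
      refine Submodule.sum_mem D ?_
      intro p hp
      rw [Finset.mem_range] at hp
      have hmem1 : ∀ l < j, (T ^ l) ((T ^ p) w) ∈ D := by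
        intro l hl
        rw [← Module.End.mul_apply, ← pow_add]
        exact aux_mem T D ω R hclosed hRdom hQR ht0 n (l + p) (by omega) x
      rw [aux_Tpow_smul T D hclosed j _ hmem1]
      refine (aux_smulD T D hclosed ?_ _).1
      rw [← Module.End.mul_apply, ← pow_add]
      exact aux_mem T D ω R hclosed hRdom hQR ht0 n (j + p) (by omega) x
    have hτ : t ^ (-(n:ℝ)) = (t ^ n)⁻¹ := by
      rw [Real.rpow_neg ht0.le, Real.rpow_natCast]
    have hKle : KX T (D : Set X) n (t ^ (-(n:ℝ))) x
        ≤ ‖aa‖ + (t ^ n)⁻¹ * (‖bb‖ + ‖(T ^ n) bb‖) := by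
      rw [← hτ]
      apply csInf_le
      · refine ⟨0, ?_⟩
        rintro r ⟨a', b', -, -, rfl⟩
        have hτ0 : (0:ℝ) ≤ t ^ (-(n:ℝ)) := Real.rpow_nonneg ht0.le _
        have := norm_nonneg a'
        have := norm_nonneg b'
        have := norm_nonneg ((T ^ n) b')
        nlinarith
      · exact ⟨aa, bb, hx, hmembb, rfl⟩
    have hterm_a : ∀ k ∈ Finset.range n,
        ‖d (n+1+k) • (T ^ (n+1+k)) w‖ ≤ K * C m (k+1) * ‖z‖ := by
      intro k hk
      rw [Finset.mem_range] at hk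
      rw [norm_smul, Real.norm_eq_abs]
      have hA := hb (n+1+k)
      have hB := hC m (k+1) (by omega) t ht z
      rw [show 2 * m = n from by omega] at hB
      have hne : (T ^ (n+1+k)) w = (T ^ (k+1)) (((R t) ^ m) z) := by
        rw [show n+1+k = n+(k+1) from by omega, hTnp (k+1)]
      rw [hne]
      refine le_of_mul_le_mul_right ?_ (show (0:ℝ) < t^(n+1+k) * t^n from by positivity)
      calc |d (n+1+k)| * ‖(T ^ (k+1)) (((R t) ^ m) z)‖ * (t^(n+1+k) * t^n)
          = (|d (n+1+k)| * t^(n+1+k)) * (‖(T ^ (k+1)) (((R t) ^ m) z)‖ * t^n) := by ring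
        _ ≤ (K * t^(2*n)) * (C m (k+1) * (‖z‖ * t^(k+1))) :=
            mul_le_mul hA hB (by positivity) (by positivity)
        _ = K * C m (k+1) * ‖z‖ * (t^(n+1+k) * t^n) := by ring
    have hbnd_a : ‖aa‖ ≤ (∑ k ∈ Finset.range n, K * C m (k+1)) * ‖z‖ := by
      calc ‖aa‖ ≤ ∑ k ∈ Finset.range n, ‖d (n+1+k) • (T ^ (n+1+k)) w‖ := by
            rw [haa]; exact norm_sum_le _ _
        _ ≤ ∑ k ∈ Finset.range n, K * C m (k+1) * ‖z‖ := Finset.sum_le_sum hterm_a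
        _ = (∑ k ∈ Finset.range n, K * C m (k+1)) * ‖z‖ := by rw [Finset.sum_mul]
    have hterm_b : ∀ p ∈ Finset.range (n+1),
        ‖d p • (T ^ p) w‖ ≤ K * C n p * ‖x‖ := by
      intro p hp
      rw [Finset.mem_range] at hp
      rw [norm_smul, Real.norm_eq_abs]
      have hA := hb p
      have hB := hC n p (by omega) t ht x
      refine le_of_mul_le_mul_right ?_ (show (0:ℝ) < t^p * t^(2*n) from by positivity)
      calc |d p| * ‖(T ^ p) w‖ * (t^p * t^(2*n))
          = (|d p| * t^p) * (‖(T ^ p) w‖ * t^(2*n)) := by ring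
        _ ≤ (K * t^(2*n)) * (C n p * (‖x‖ * t^p)) :=
            mul_le_mul hA hB (by positivity) (by positivity)
        _ = K * C n p * ‖x‖ * (t^p * t^(2*n)) := by ring
    have hbnd_b : ‖bb‖ ≤ (∑ p ∈ Finset.range (n+1), K * C n p) * ‖x‖ := by
      calc ‖bb‖ ≤ ∑ p ∈ Finset.range (n+1), ‖d p • (T ^ p) w‖ := by
            rw [hbb]; exact norm_sum_le _ _
        _ ≤ ∑ p ∈ Finset.range (n+1), K * C n p * ‖x‖ := Finset.sum_le_sum hterm_b
        _ = (∑ p ∈ Finset.range (n+1), K * C n p) * ‖x‖ := by rw [Finset.sum_mul]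
    have hTb : (T ^ n) bb = ∑ p ∈ Finset.range (n+1), d p • (T ^ (n+p)) w := by
      rw [hbb, map_sum]
      refine Finset.sum_congr rfl fun p hp => ?_
      rw [Finset.mem_range] at hp
      have hmem1 : ∀ l < n, (T ^ l) ((T ^ p) w) ∈ D := by
        intro l hl
        rw [← Module.End.mul_apply, ← pow_add]
        exact aux_mem T D ω R hclosed hRdom hQR ht0 n (l + p) (by omega) x
      rw [aux_Tpow_smul T D hclosed n _ hmem1, ← Module.End.mul_apply, ← pow_add]
    have hterm_T : ∀ p ∈ Finset.range (n+1),
        ‖d p • (T ^ (n+p)) w‖ ≤ K * C m p * ‖z‖ * t ^ n := by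
      intro p hp
      rw [Finset.mem_range] at hp
      rw [norm_smul, Real.norm_eq_abs]
      have hA := hb p
      have hB := hC m p (by omega) t ht z
      rw [show 2 * m = n from by omega] at hB
      rw [hTnp p]
      refine le_of_mul_le_mul_right ?_ (show (0:ℝ) < t^p * t^n from by positivity)
      calc |d p| * ‖(T ^ p) (((R t) ^ m) z)‖ * (t^p * t^n)
          = (|d p| * t^p) * (‖(T ^ p) (((R t) ^ m) z)‖ * t^n) := by ring
        _ ≤ (K * t^(2*n)) * (C m p * (‖z‖ * t^p)) :=
            mul_le_mul hA hB (by positivity) (by positivity)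
        _ = K * C m p * ‖z‖ * t^n * (t^p * t^n) := by ring
    have hbnd_T : ‖(T ^ n) bb‖ ≤ (∑ p ∈ Finset.range (n+1), K * C m p) * ‖z‖ * t ^ n := by
      calc ‖(T ^ n) bb‖ ≤ ∑ p ∈ Finset.range (n+1), ‖d p • (T ^ (n+p)) w‖ := by
            rw [hTb]; exact norm_sum_le _ _
        _ ≤ ∑ p ∈ Finset.range (n+1), K * C m p * ‖z‖ * t ^ n := Finset.sum_le_sum hterm_T
        _ = (∑ p ∈ Finset.range (n+1), K * C m p) * ‖z‖ * t ^ n := by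
            rw [Finset.sum_mul, Finset.sum_mul]
    have hψ : psi T R n x t = ‖z‖ := by
      unfold psi
      rw [if_pos ⟨m, hm⟩, show n / 2 = m from by omega, hz]
    rw [hψ]
    calc KX T (D : Set X) n (t ^ (-(n:ℝ))) x
        ≤ ‖aa‖ + (t ^ n)⁻¹ * (‖bb‖ + ‖(T ^ n) bb‖) := hKle
      _ ≤ (∑ k ∈ Finset.range n, K * C m (k+1)) * ‖z‖
          + (t ^ n)⁻¹ * ((∑ p ∈ Finset.range (n+1), K * C n p) * ‖x‖
            + (∑ p ∈ Finset.range (n+1), K * C m p) * ‖z‖ * t ^ n) := by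
          refine add_le_add hbnd_a (mul_le_mul_of_nonneg_left
            (add_le_add hbnd_b hbnd_T) (by positivity))
      _ = ((∑ k ∈ Finset.range n, K * C m (k+1)) + (∑ p ∈ Finset.range (n+1), K * C m p)) * ‖z‖
          + (∑ p ∈ Finset.range (n+1), K * C n p) * ‖x‖ / t ^ n := by
          field_simp
          ring
  · -- ODD CASE
    obtain ⟨mo, hmo⟩ := ho
    subst hmo
    set n := 2 * mo + 1 with hn'
    refine ⟨(∑ k ∈ Finset.range n, K * C mo k) + ((∑ k ∈ Finset.range n, K * C mo k)
          + K * C mo 0),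
        ∑ p ∈ Finset.range (n+1), K * C n p,
        add_nonneg (Finset.sum_nonneg fun i _ => mul_nonneg hK0 (hC0 _ _))
          (add_nonneg (Finset.sum_nonneg fun i _ => mul_nonneg hK0 (hC0 _ _))
            (mul_nonneg hK0 (hC0 _ _))),
        Finset.sum_nonneg fun i _ => mul_nonneg hK0 (hC0 _ _), ?_⟩
    intro x t ht
    have ht0 : (0:ℝ) < t := lt_of_lt_of_le one_pos ht
    have htn : (0:ℝ) < t ^ n := pow_pos ht0 n
    obtain ⟨d, hb, hvan, hsum⟩ := hK t ht x
    set w : X := ((R t) ^ n) x with hw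
    set z1 : X := (T ^ (n+1)) (((R t) ^ (mo+1)) x) with hz1
    set z2 : X := (T ^ n) (((R t) ^ (mo+1)) x) with hz2
    have hwsplit : w = ((R t) ^ mo) (((R t) ^ (mo+1)) x) := by
      rw [hw, show n = mo + (mo+1) from by omega, pow_add, Module.End.mul_apply]
    have hTn1 : (T ^ (n+1)) w = ((R t) ^ mo) z1 := by
      rw [hwsplit, aux_commPow T D ω R hclosed hRdom hQR hRQ ht0 (n+1) mo (((R t) ^ (mo+1)) x)
        (fun l hl => aux_mem T D ω R hclosed hRdom hQR ht0 (mo+1) l (by omega) x), ← hz1]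
    have hTn2 : (T ^ n) w = ((R t) ^ mo) z2 := by
      rw [hwsplit, aux_commPow T D ω R hclosed hRdom hQR hRQ ht0 n mo (((R t) ^ (mo+1)) x)
        (fun l hl => aux_mem T D ω R hclosed hRdom hQR ht0 (mo+1) l (by omega) x), ← hz2]
    have hTnp1 : ∀ k : ℕ, (T ^ (n+1+k)) w = (T ^ k) (((R t) ^ mo) z1) := by
      intro k
      rw [show n+1+k = k + (n+1) from by omega, pow_add, Module.End.mul_apply, hTn1]
    set bb : X := ∑ p ∈ Finset.range (n+1), d p • (T ^ p) w with hbb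
    set aa : X := ∑ k ∈ Finset.range n, d (n+1+k) • (T ^ (n+1+k)) w with haa
    have hx : x = aa + bb := by
      have h1 : ∑ p ∈ Finset.range (2*n+1), d p • (T ^ p) w
          = bb + ∑ p ∈ Finset.Ico (n+1) (2*n+1), d p • (T ^ p) w := by
        rw [hbb, Finset.range_eq_Ico, Finset.range_eq_Ico,
          Finset.sum_Ico_consecutive _ (by omega) (by omega)]
      have h2 : ∑ p ∈ Finset.Ico (n+1) (2*n+1), d p • (T ^ p) w = aa := by
        rw [haa, Finset.sum_Ico_eq_sum_range, show 2*n+1 - (n+1) = n from by omega]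
      rw [hsum, h1, h2, add_comm]
    have hmembb : bb ∈ domN T (D : Set X) n := by
      intro j hj
      rw [hbb, map_sum]
      refine Submodule.sum_mem D ?_
      intro p hp
      rw [Finset.mem_range] at hp
      have hmem1 : ∀ l < j, (T ^ l) ((T ^ p) w) ∈ D := by
        intro l hl
        rw [← Module.End.mul_apply, ← pow_add]
        exact aux_mem T D ω R hclosed hRdom hQR ht0 n (l + p) (by omega) x
      rw [aux_Tpow_smul T D hclosed j _ hmem1]
      refine (aux_smulD T D hclosed ?_ _).1
      rw [← Module.End.mul_apply, ← pow_add]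
      exact aux_mem T D ω R hclosed hRdom hQR ht0 n (j + p) (by omega) x
    have hτ : t ^ (-(n:ℝ)) = (t ^ n)⁻¹ := by
      rw [Real.rpow_neg ht0.le, Real.rpow_natCast]
    have hKle : KX T (D : Set X) n (t ^ (-(n:ℝ))) x
        ≤ ‖aa‖ + (t ^ n)⁻¹ * (‖bb‖ + ‖(T ^ n) bb‖) := by
      rw [← hτ]
      apply csInf_le
      · refine ⟨0, ?_⟩
        rintro r ⟨a', b', -, -, rfl⟩
        have hτ0 : (0:ℝ) ≤ t ^ (-(n:ℝ)) := Real.rpow_nonneg ht0.le _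
        have := norm_nonneg a'
        have := norm_nonneg b'
        have := norm_nonneg ((T ^ n) b')
        nlinarith
      · exact ⟨aa, bb, hx, hmembb, rfl⟩
    have hterm_a : ∀ k ∈ Finset.range n,
        ‖d (n+1+k) • (T ^ (n+1+k)) w‖ ≤ K * C mo k * ‖z1‖ := by
      intro k hk
      rw [Finset.mem_range] at hk
      rw [norm_smul, Real.norm_eq_abs]
      have hA := hb (n+1+k)
      have hB := hC mo k (by omega) t ht z1
      rw [hTnp1 k]
      refine le_of_mul_le_mul_right ?_
        (show (0:ℝ) < t^(n+1+k) * t^(2*mo) from by positivity)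
      calc |d (n+1+k)| * ‖(T ^ k) (((R t) ^ mo) z1)‖ * (t^(n+1+k) * t^(2*mo))
          = (|d (n+1+k)| * t^(n+1+k)) * (‖(T ^ k) (((R t) ^ mo) z1)‖ * t^(2*mo)) := by ring
        _ ≤ (K * t^(2*n)) * (C mo k * (‖z1‖ * t^k)) :=
            mul_le_mul hA hB (by positivity) (by positivity)
        _ = K * C mo k * ‖z1‖ * (t^(n+1+k) * t^(2*mo)) := by rw [hn']; ring
    have hbnd_a : ‖aa‖ ≤ (∑ k ∈ Finset.range n, K * C mo k) * ‖z1‖ := by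
      calc ‖aa‖ ≤ ∑ k ∈ Finset.range n, ‖d (n+1+k) • (T ^ (n+1+k)) w‖ := by
            rw [haa]; exact norm_sum_le _ _
        _ ≤ ∑ k ∈ Finset.range n, K * C mo k * ‖z1‖ := Finset.sum_le_sum hterm_a
        _ = (∑ k ∈ Finset.range n, K * C mo k) * ‖z1‖ := by rw [Finset.sum_mul]
    have hterm_b : ∀ p ∈ Finset.range (n+1),
        ‖d p • (T ^ p) w‖ ≤ K * C n p * ‖x‖ := by
      intro p hp
      rw [Finset.mem_range] at hp
      rw [norm_smul, Real.norm_eq_abs]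
      have hA := hb p
      have hB := hC n p (by omega) t ht x
      refine le_of_mul_le_mul_right ?_ (show (0:ℝ) < t^p * t^(2*n) from by positivity)
      calc |d p| * ‖(T ^ p) w‖ * (t^p * t^(2*n))
          = (|d p| * t^p) * (‖(T ^ p) w‖ * t^(2*n)) := by ring
        _ ≤ (K * t^(2*n)) * (C n p * (‖x‖ * t^p)) :=
            mul_le_mul hA hB (by positivity) (by positivity)
        _ = K * C n p * ‖x‖ * (t^p * t^(2*n)) := by ring
    have hbnd_b : ‖bb‖ ≤ (∑ p ∈ Finset.range (n+1), K * C n p) * ‖x‖ := by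
      calc ‖bb‖ ≤ ∑ p ∈ Finset.range (n+1), ‖d p • (T ^ p) w‖ := by
            rw [hbb]; exact norm_sum_le _ _
        _ ≤ ∑ p ∈ Finset.range (n+1), K * C n p * ‖x‖ := Finset.sum_le_sum hterm_b
        _ = (∑ p ∈ Finset.range (n+1), K * C n p) * ‖x‖ := by rw [Finset.sum_mul]
    have hTb : (T ^ n) bb = ∑ p ∈ Finset.range (n+1), d p • (T ^ (n+p)) w := by
      rw [hbb, map_sum]
      refine Finset.sum_congr rfl fun p hp => ?_
      rw [Finset.mem_range] at hp
      have hmem1 : ∀ l < n, (T ^ l) ((T ^ p) w) ∈ D := by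
        intro l hl
        rw [← Module.End.mul_apply, ← pow_add]
        exact aux_mem T D ω R hclosed hRdom hQR ht0 n (l + p) (by omega) x
      rw [aux_Tpow_smul T D hclosed n _ hmem1, ← Module.End.mul_apply, ← pow_add]
    have hterm_T1 : ∀ k ∈ Finset.range n,
        ‖d (k+1) • (T ^ (n+(k+1))) w‖ ≤ K * C mo k * ‖z1‖ * t ^ n := by
      intro k hk
      rw [Finset.mem_range] at hk
      rw [norm_smul, Real.norm_eq_abs]
      have hA := hb (k+1)
      have hB := hC mo k (by omega) t ht z1
      rw [show n+(k+1) = n+1+k from by omega, hTnp1 k]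
      refine le_of_mul_le_mul_right ?_
        (show (0:ℝ) < t^(k+1) * t^(2*mo) from by positivity)
      calc |d (k+1)| * ‖(T ^ k) (((R t) ^ mo) z1)‖ * (t^(k+1) * t^(2*mo))
          = (|d (k+1)| * t^(k+1)) * (‖(T ^ k) (((R t) ^ mo) z1)‖ * t^(2*mo)) := by ring
        _ ≤ (K * t^(2*n)) * (C mo k * (‖z1‖ * t^k)) :=
            mul_le_mul hA hB (by positivity) (by positivity)
        _ = K * C mo k * ‖z1‖ * t ^ n * (t^(k+1) * t^(2*mo)) := by rw [hn']; ring
    have hterm_T0 : ‖d 0 • (T ^ (n+0)) w‖ ≤ K * C mo 0 * ‖z2‖ * t ^ (n+1) := by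
      rw [norm_smul, Real.norm_eq_abs]
      have hA := hb 0
      rw [pow_zero, mul_one] at hA
      have hB := hC mo 0 (by omega) t ht z2
      rw [pow_zero, Module.End.one_apply, pow_zero, mul_one] at hB
      rw [show n+0 = n from by omega, hTn2]
      refine le_of_mul_le_mul_right ?_ (show (0:ℝ) < t^(2*mo) from by positivity)
      calc |d 0| * ‖((R t) ^ mo) z2‖ * t^(2*mo)
          = |d 0| * (‖((R t) ^ mo) z2‖ * t^(2*mo)) := by ring
        _ ≤ (K * t^(2*n)) * (C mo 0 * ‖z2‖) :=
            mul_le_mul hA hB (by positivity) (by positivity)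
        _ = K * C mo 0 * ‖z2‖ * t ^ (n+1) * t^(2*mo) := by rw [hn']; ring
    have hbnd_T : ‖(T ^ n) bb‖ ≤ (∑ k ∈ Finset.range n, K * C mo k) * ‖z1‖ * t ^ n
        + K * C mo 0 * ‖z2‖ * t ^ (n+1) := by
      rw [hTb, Finset.sum_range_succ' (fun p => d p • (T ^ (n+p)) w) n]
      calc ‖(∑ k ∈ Finset.range n, d (k+1) • (T ^ (n+(k+1))) w) + d 0 • (T ^ (n+0)) w‖
          ≤ ‖∑ k ∈ Finset.range n, d (k+1) • (T ^ (n+(k+1))) w‖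
            + ‖d 0 • (T ^ (n+0)) w‖ := norm_add_le _ _
        _ ≤ (∑ k ∈ Finset.range n, ‖d (k+1) • (T ^ (n+(k+1))) w‖)
            + K * C mo 0 * ‖z2‖ * t ^ (n+1) :=
            add_le_add (norm_sum_le _ _) hterm_T0
        _ ≤ (∑ k ∈ Finset.range n, K * C mo k * ‖z1‖ * t ^ n)
            + K * C mo 0 * ‖z2‖ * t ^ (n+1) :=
            add_le_add (Finset.sum_le_sum hterm_T1) le_rfl
        _ = (∑ k ∈ Finset.range n, K * C mo k) * ‖z1‖ * t ^ n
            + K * C mo 0 * ‖z2‖ * t ^ (n+1) := by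
            rw [Finset.sum_mul, Finset.sum_mul]
    have hψ : psi T R n x t = ‖z1‖ + t * ‖z2‖ := by
      unfold psi
      rw [if_neg (by simp [hn', Nat.even_iff] : ¬ Even n),
        show (n+1)/2 = mo + 1 from by omega, hz1, hz2]
    rw [hψ]
    have hfin : (t ^ n)⁻¹ * ((∑ p ∈ Finset.range (n+1), K * C n p) * ‖x‖
          + ((∑ k ∈ Finset.range n, K * C mo k) * ‖z1‖ * t ^ n
            + K * C mo 0 * ‖z2‖ * t ^ (n+1)))
        = (∑ p ∈ Finset.range (n+1), K * C n p) * ‖x‖ / t ^ n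
          + ((∑ k ∈ Finset.range n, K * C mo k) * ‖z1‖ + K * C mo 0 * (t * ‖z2‖)) := by
      rw [show t ^ (n+1) = t ^ n * t from by ring]
      field_simp
    calc KX T (D : Set X) n (t ^ (-(n:ℝ))) x
        ≤ ‖aa‖ + (t ^ n)⁻¹ * (‖bb‖ + ‖(T ^ n) bb‖) := hKle
      _ ≤ (∑ k ∈ Finset.range n, K * C mo k) * ‖z1‖
          + (t ^ n)⁻¹ * ((∑ p ∈ Finset.range (n+1), K * C n p) * ‖x‖
            + ((∑ k ∈ Finset.range n, K * C mo k) * ‖z1‖ * t ^ n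
              + K * C mo 0 * ‖z2‖ * t ^ (n+1))) := by
          refine add_le_add hbnd_a (mul_le_mul_of_nonneg_left
            (add_le_add hbnd_b hbnd_T) (by positivity))
      _ = (∑ p ∈ Finset.range (n+1), K * C n p) * ‖x‖ / t ^ n
          + ((∑ k ∈ Finset.range n, K * C mo k) * ‖z1‖
            + ((∑ k ∈ Finset.range n, K * C mo k) * ‖z1‖
              + K * C mo 0 * (t * ‖z2‖))) := by rw [hfin]; ring
      _ ≤ ((∑ k ∈ Finset.range n, K * C mo k) + ((∑ k ∈ Finset.range n, K * C mo k)
            + K * C mo 0)) * (‖z1‖ + t * ‖z2‖)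
          + (∑ p ∈ Finset.range (n+1), K * C n p) * ‖x‖ / t ^ n := by
          have hs1 : (0:ℝ) ≤ ∑ k ∈ Finset.range n, K * C mo k :=
            Finset.sum_nonneg fun i _ => mul_nonneg hK0 (hC0 _ _)
          have hs2 : (0:ℝ) ≤ K * C mo 0 := mul_nonneg hK0 (hC0 _ _)
          have h1 : (0:ℝ) ≤ ‖z1‖ := norm_nonneg _
          have h2 : (0:ℝ) ≤ t * ‖z2‖ := mul_nonneg ht0.le (norm_nonneg _)
          nlinarith

end
end

section
/- Let T satisfy the sectorial-type hypotheses, n ∈ ℕ, and x ∈ X. Then for all t > 0, ψ_x(t) ≤ 2·(1+3M)^{⌈n/2⌉}·K(t^{-n}, x), where K is the K-functional of the couple X, D(Tⁿ) and ψ_x is defined by ψ_x(t) = ‖TⁿQ_{te^{iω}}(T)^{−n/2}x‖ for n even and ψ_x(t) = ‖T^{n+1}Q_{te^{iω}}(T)^{−(n+1)/2}x‖ + t‖TⁿQ_{te^{iω}}(T)^{−(n+1)/2}x‖ for n odd. -/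
noncomputable section

open MulOpposite

local notation "ℍ" => Quaternion ℝ

open MeasureTheory ENNReal

/-- the lower bound `ψ_x(t) ≤ 2 (1+3M)^{⌈n/2⌉} K(t^{-n},x)` for `t > 0`,
where `K` is the `K`-functional of the couple `X, D(Tⁿ)`. -/
theorem psi_le_K
    {X : Type*} [NormedAddCommGroup X] [NormedSpace ℝ X] [CompleteSpace X]
    [Module ℍᵐᵒᵖ X] [SMulCommClass ℍᵐᵒᵖ ℝ X]
    -- right Banach space: `‖x·s‖ = ‖x‖·|s|`
    (hnorm : ∀ (x : X) (s : ℍ), ‖(op s) • x‖ = ‖x‖ * ‖s‖)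
    -- `T` is a closed right linear operator with domain `D`
    (T : Module.End ℍᵐᵒᵖ X) (D : Submodule ℍᵐᵒᵖ X)
    (hclosed : IsClosed {p : X × X | p.1 ∈ (D : Set X) ∧ T p.1 = p.2})
    -- the ray `S_ω` lies in the S-resolvent set, with pseudo-resolvents `R t = Q_{te^{iω}}(T)⁻¹`
    (ω : ℝ) (hω : ω ∈ Set.Icc (0:ℝ) Real.pi)
    (M : ℝ) (hM : 0 ≤ M)
    (R : ℝ → Module.End ℍᵐᵒᵖ X)
    (hRcont : ∀ t > 0, Continuous (R t))
    (hRdom : ∀ t > 0, ∀ x : X, R t x ∈ domN T (D : Set X) 2)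
    (hQR : ∀ t > 0, ∀ x : X, Qray T ω t (R t x) = x)
    (hRQ : ∀ t > 0, ∀ x ∈ domN T (D : Set X) 2, R t (Qray T ω t x) = x)
    -- the resolvent bounds `‖Q_s⁻¹‖ ≤ M/|s|²` and `‖T Q_s⁻¹‖ ≤ M/|s|` on `S_ω`
    (hR1 : ∀ t > 0, ∀ x : X, ‖R t x‖ ≤ M / t ^ 2 * ‖x‖)
    (hR2 : ∀ t > 0, ∀ x : X, ‖T (R t x)‖ ≤ M / t * ‖x‖)
    (n : ℕ) (hn : 0 < n) :
    ∀ x : X, ∀ t > (0:ℝ),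
      psi T R n x t ≤ 2 * (1 + 3 * M) ^ ((n + 1) / 2) * KX T (D : Set X) n (t ^ (-(n : ℝ))) x := by
  intro x t ht
  have htne : t ≠ 0 := ne_of_gt ht
  have ht2 : (0:ℝ) < t ^ 2 := by positivity
  set α : ℝ := 2 * t * Real.cos ω with hαdef
  -- the basic identity coming from `Q ∘ R = 1`
  have L0 : ∀ y : X, (T ^ 2) (R t y) = y + α • T (R t y) - (t ^ 2) • R t y := by
    intro y
    have h := hQR t ht y
    simp only [Qray, LinearMap.sub_apply, LinearMap.add_apply, LinearMap.smul_apply,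
      Module.End.one_apply] at h
    rw [← hαdef] at h
    rw [eq_add_of_sub_eq (eq_sub_of_add_eq h)]
    abel
  have pow2 : ∀ y : X, (T ^ 2) y = T (T y) := by
    intro y; rw [pow_two]; rfl
  -- `R t` and `T ∘ R t` commute with real scalars (continuous additive maps)
  have Rsmul : ∀ (r : ℝ) (y : X), R t (r • y) = r • R t y := fun r y =>
    map_real_smul (R t) (hRcont t ht) r y
  have Bcont : Continuous fun y : X => T (R t y) := by
    have hlip : LipschitzWith (Real.toNNReal (M / t)) fun y : X => T (R t y) := by
      apply LipschitzWith.of_dist_le_mul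
      intro a b
      rw [dist_eq_norm, dist_eq_norm, ← map_sub, ← map_sub]
      calc ‖T (R t (a - b))‖ ≤ M / t * ‖a - b‖ := hR2 t ht _
        _ ≤ (Real.toNNReal (M / t) : ℝ) * ‖a - b‖ := by
            gcongr
            exact Real.le_coe_toNNReal _
    exact hlip.continuous
  have Bsmul : ∀ (r : ℝ) (y : X), T (R t (r • y)) = r • T (R t y) := fun r y =>
    map_real_smul (T.toAddMonoidHom.comp (R t).toAddMonoidHom) Bcont r y
  -- ranges are in the domain
  have RmemD : ∀ y : X, R t y ∈ D := by
    intro y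
    have h := hRdom t ht y
    simp only [domN, Set.mem_setOf_eq] at h
    simpa using h 0 (by norm_num)
  have BmemD : ∀ y : X, T (R t y) ∈ D := by
    intro y
    have h := hRdom t ht y
    simp only [domN, Set.mem_setOf_eq] at h
    simpa using h 1 (by norm_num)
  -- `Q (T (R y)) = T y` for every `y`
  have L4 : ∀ y : X, Qray T ω t (T (R t y)) = T y := by
    intro y
    have h1 : T (T (R t y)) = y + α • T (R t y) - (t ^ 2) • R t y := by
      rw [← pow2, L0]
    have e1 : T (α • T (R t y)) = α • y + (α * α) • T (R t y) - (t ^ 2 * α) • R t y := by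
      rw [← Bsmul α y, ← pow2, L0, Bsmul, Rsmul, smul_smul, smul_smul]
    have e2 : T ((t ^ 2) • R t y) = (t ^ 2) • T (R t y) := by
      rw [← Rsmul, Bsmul]
    have h2 : T (T (T (R t y))) =
        T y + (α • y + (α * α) • T (R t y) - (t ^ 2 * α) • R t y) - (t ^ 2) • T (R t y) := by
      rw [h1, map_sub, map_add, e1, e2]
    simp only [Qray, LinearMap.sub_apply, LinearMap.add_apply, LinearMap.smul_apply,
      Module.End.one_apply]
    rw [← hαdef, pow2, h2, h1]
    module
  -- commutation `T (R y) = R (T y)` on the domain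
  have comm : ∀ y : X, y ∈ D → T (R t y) = R t (T y) := by
    intro y hy
    have hmem : T (R t y) ∈ domN T (D : Set X) 2 := by
      simp only [domN, Set.mem_setOf_eq]
      intro j hj
      interval_cases j
      · simpa using BmemD y
      · have h1 : (T ^ 1) (T (R t y)) = y + T (R t (α • y)) - R t ((t ^ 2) • y) := by
          rw [pow_one, ← pow2, L0, Bsmul, Rsmul]
        rw [h1]
        exact D.sub_mem (D.add_mem hy (BmemD _)) (RmemD _)
    have h := hRQ t ht _ hmem
    rw [L4 y] at h
    exact h.symm
  -- iterated commutation with powers of `T`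
  have commPow : ∀ (j : ℕ) (z : X), (∀ i, i < j → (T ^ i) z ∈ D) →
      R t ((T ^ j) z) = (T ^ j) (R t z) := by
    intro j
    induction j with
    | zero => intro z _; simp
    | succ j ih =>
      intro z hz
      have e1 : ∀ w : X, (T ^ (j + 1)) w = T ((T ^ j) w) := by
        intro w; rw [pow_succ']; rfl
      rw [e1 z, ← comm ((T ^ j) z) (hz j (Nat.lt_succ_self j)),
        ih z (fun i hi => hz i (hi.trans (Nat.lt_succ_self j))), ← e1]
  have RdomN : ∀ (k : ℕ) (z : X), z ∈ domN T (D : Set X) k →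
      R t z ∈ domN T (D : Set X) k := by
    intro k z hz
    simp only [domN, Set.mem_setOf_eq] at hz ⊢
    intro i hik
    rw [← commPow i z (fun i' hi' => hz i' (hi'.trans hik))]
    exact RmemD _
  -- commutation with powers of `R`
  have commPowR : ∀ (nn k : ℕ) (z : X), z ∈ domN T (D : Set X) nn →
      (T ^ nn) (((R t) ^ k) z) = ((R t) ^ k) ((T ^ nn) z) := by
    intro nn k
    induction k with
    | zero => intro z _; simp
    | succ k ih =>
      intro z hz
      have e1 : ∀ w : X, ((R t) ^ (k + 1)) w = ((R t) ^ k) (R t w) := by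
        intro w; rw [pow_succ]; rfl
      rw [e1 z, ih (R t z) (RdomN nn z hz),
        ← commPow nn z (fun i hi => hz i hi), ← e1]
  -- norm bounds
  have hMt2 : (0:ℝ) ≤ M / t ^ 2 := by positivity
  have Rpow_bound : ∀ (k : ℕ) (z : X), ‖((R t) ^ k) z‖ ≤ (M / t ^ 2) ^ k * ‖z‖ := by
    intro k
    induction k with
    | zero => intro z; simp
    | succ k ih =>
      intro z
      have e1 : ((R t) ^ (k + 1)) z = ((R t) ^ k) (R t z) := by rw [pow_succ]; rfl
      rw [e1]
      calc ‖((R t) ^ k) (R t z)‖ ≤ (M / t ^ 2) ^ k * ‖R t z‖ := ih _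
        _ ≤ (M / t ^ 2) ^ k * (M / t ^ 2 * ‖z‖) :=
            mul_le_mul_of_nonneg_left (hR1 t ht z) (pow_nonneg hMt2 k)
        _ = (M / t ^ 2) ^ (k + 1) * ‖z‖ := by ring
  have h3M : (0:ℝ) ≤ 1 + 3 * M := by linarith
  have hcos : |Real.cos ω| ≤ 1 := Real.abs_cos_le_one ω
  have Abound : ∀ z : X, ‖(T ^ 2) (R t z)‖ ≤ (1 + 3 * M) * ‖z‖ := by
    intro z
    rw [L0]
    have h1 : ‖z + α • T (R t z) - (t ^ 2) • R t z‖
        ≤ ‖z‖ + ‖α • T (R t z)‖ + ‖(t ^ 2) • R t z‖ :=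
      le_trans (norm_sub_le _ _) (add_le_add_left (norm_add_le _ _) _)
    have hα : ‖α‖ ≤ 2 * t := by
      rw [Real.norm_eq_abs, hαdef, abs_mul, abs_of_pos (by linarith : (0:ℝ) < 2 * t)]
      nlinarith [mul_nonneg (by linarith : (0:ℝ) ≤ 2 * t) (sub_nonneg.mpr hcos)]
    have h2 : ‖α • T (R t z)‖ ≤ 2 * t * (M / t * ‖z‖) := by
      rw [norm_smul]
      exact mul_le_mul hα (hR2 t ht z) (norm_nonneg _) (by linarith)
    have h3 : ‖(t ^ 2) • R t z‖ ≤ M * ‖z‖ := by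
      rw [norm_smul, Real.norm_eq_abs, abs_of_pos ht2]
      calc t ^ 2 * ‖R t z‖ ≤ t ^ 2 * (M / t ^ 2 * ‖z‖) :=
          mul_le_mul_of_nonneg_left (hR1 t ht z) ht2.le
        _ = M * ‖z‖ := by field_simp
    have h4 : 2 * t * (M / t * ‖z‖) = 2 * M * ‖z‖ := by field_simp
    calc ‖z + α • T (R t z) - (t ^ 2) • R t z‖
        ≤ ‖z‖ + ‖α • T (R t z)‖ + ‖(t ^ 2) • R t z‖ := h1
      _ ≤ ‖z‖ + 2 * t * (M / t * ‖z‖) + M * ‖z‖ :=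
          add_le_add (add_le_add le_rfl h2) h3
      _ = (1 + 3 * M) * ‖z‖ := by rw [h4]; ring
  -- the main even bound `‖T^{2k} R^k z‖ ≤ (1+3M)^k ‖z‖`
  have main_even : ∀ (k : ℕ) (z : X),
      ‖(T ^ (2 * k)) (((R t) ^ k) z)‖ ≤ (1 + 3 * M) ^ k * ‖z‖ := by
    intro k
    induction k with
    | zero => intro z; simp
    | succ k ih =>
      intro z
      have e1 : ((R t) ^ (k + 1)) z = ((R t) ^ k) (R t z) := by rw [pow_succ]; rfl
      have e2 : ∀ w : X, (T ^ (2 * (k + 1))) w = (T ^ (2 * k)) ((T ^ 2) w) := by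
        intro w
        rw [show 2 * (k + 1) = 2 * k + 2 by ring, pow_add]; rfl
      rw [e1, e2, commPowR 2 k (R t z) (hRdom t ht z)]
      calc ‖(T ^ (2 * k)) (((R t) ^ k) ((T ^ 2) (R t z)))‖
          ≤ (1 + 3 * M) ^ k * ‖(T ^ 2) (R t z)‖ := ih _
        _ ≤ (1 + 3 * M) ^ k * ((1 + 3 * M) * ‖z‖) :=
            mul_le_mul_of_nonneg_left (Abound z) (pow_nonneg h3M k)
        _ = (1 + 3 * M) ^ (k + 1) * ‖z‖ := by ring
  -- the odd bound `‖T^{2k+1} R^{k+1} z‖ ≤ (1+3M)^k (M/t) ‖z‖`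
  have main_odd : ∀ (k : ℕ) (z : X),
      ‖(T ^ (2 * k + 1)) (((R t) ^ (k + 1)) z)‖ ≤ (1 + 3 * M) ^ k * (M / t * ‖z‖) := by
    intro k z
    have e1 : ((R t) ^ (k + 1)) z = ((R t) ^ k) (R t z) := by rw [pow_succ]; rfl
    have e2 : ∀ w : X, (T ^ (2 * k + 1)) w = (T ^ (2 * k)) ((T ^ 1) w) := by
      intro w; rw [pow_add]; rfl
    have hd1 : R t z ∈ domN T (D : Set X) 1 := by
      simp only [domN, Set.mem_setOf_eq]
      intro j hj
      interval_cases j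
      simpa using RmemD z
    rw [e1, e2, commPowR 1 k (R t z) hd1]
    calc ‖(T ^ (2 * k)) (((R t) ^ k) ((T ^ 1) (R t z)))‖
        ≤ (1 + 3 * M) ^ k * ‖(T ^ 1) (R t z)‖ := main_even k _
      _ ≤ (1 + 3 * M) ^ k * (M / t * ‖z‖) := by
          refine mul_le_mul_of_nonneg_left ?_ (pow_nonneg h3M k)
          simpa using hR2 t ht z
  have hMle : M ≤ 1 + 3 * M := by linarith
  have htn : (0:ℝ) < t ^ n := by positivity
  -- the core estimate for an arbitrary decomposition `x = a + b`
  have core : ∀ a b : X, x = a + b → b ∈ domN T (D : Set X) n →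
      psi T R n x t ≤ 2 * (1 + 3 * M) ^ ((n + 1) / 2) *
        (‖a‖ + (t ^ n)⁻¹ * (‖b‖ + ‖(T ^ n) b‖)) := by
    intro a b hab hb
    rcases Nat.even_or_odd n with he | ho
    · -- n even
      obtain ⟨m, hm⟩ := he
      have hn2 : n / 2 = m := by omega
      have hn12 : (n + 1) / 2 = m := by omega
      have hnm : n = 2 * m := by omega
      have he' : Even n := ⟨m, hm⟩
      have hTa : ‖(T ^ n) (((R t) ^ m) a)‖ ≤ (1 + 3 * M) ^ m * ‖a‖ := by
        rw [hnm]; exact main_even m a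
      have hTb : ‖(T ^ n) (((R t) ^ m) b)‖ ≤ (M / t ^ 2) ^ m * ‖(T ^ n) b‖ := by
        rw [commPowR n m b hb]; exact Rpow_bound m _
      have hpow : (M / t ^ 2) ^ m ≤ (1 + 3 * M) ^ m * (t ^ n)⁻¹ := by
        rw [div_pow, hnm, pow_mul, div_eq_mul_inv]
        exact mul_le_mul_of_nonneg_right (pow_le_pow_left₀ hM hMle m)
          (inv_nonneg.mpr (pow_nonneg ht2.le m))
      have hpsi : psi T R n x t = ‖(T ^ n) (((R t) ^ m) x)‖ := by
        simp [psi, he', hn2]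
      rw [hpsi, hn12]
      have hsplit : (T ^ n) (((R t) ^ m) x)
          = (T ^ n) (((R t) ^ m) a) + (T ^ n) (((R t) ^ m) b) := by
        rw [hab, map_add, map_add]
      calc ‖(T ^ n) (((R t) ^ m) x)‖
          ≤ ‖(T ^ n) (((R t) ^ m) a)‖ + ‖(T ^ n) (((R t) ^ m) b)‖ := by
            rw [hsplit]; exact norm_add_le _ _
        _ ≤ (1 + 3 * M) ^ m * ‖a‖ + (1 + 3 * M) ^ m * (t ^ n)⁻¹ * ‖(T ^ n) b‖ := by
            refine add_le_add hTa (hTb.trans ?_)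
            exact mul_le_mul_of_nonneg_right hpow (norm_nonneg _)
        _ ≤ 2 * (1 + 3 * M) ^ m * (‖a‖ + (t ^ n)⁻¹ * (‖b‖ + ‖(T ^ n) b‖)) := by
            nlinarith [mul_nonneg (pow_nonneg h3M m) (norm_nonneg a),
              mul_nonneg (mul_nonneg (pow_nonneg h3M m) (inv_nonneg.mpr htn.le)) (norm_nonneg b),
              mul_nonneg (mul_nonneg (pow_nonneg h3M m) (inv_nonneg.mpr htn.le))
                (norm_nonneg ((T ^ n) b))]
    · -- n odd
      obtain ⟨m, hm⟩ := ho
      have hno : ¬ Even n := by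
        rw [hm]; simp [Nat.even_iff, Nat.add_mul_mod_self_left]
      have hn12 : (n + 1) / 2 = m + 1 := by omega
      have hpsi : psi T R n x t = ‖(T ^ (n + 1)) (((R t) ^ (m + 1)) x)‖
          + t * ‖(T ^ n) (((R t) ^ (m + 1)) x)‖ := by
        simp [psi, hno, hn12]
      rw [hpsi, hn12]
      have hsplit1 : (T ^ (n + 1)) (((R t) ^ (m + 1)) x)
          = (T ^ (n + 1)) (((R t) ^ (m + 1)) a) + (T ^ (n + 1)) (((R t) ^ (m + 1)) b) := by
        rw [hab, map_add, map_add]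
      have hsplit2 : (T ^ n) (((R t) ^ (m + 1)) x)
          = (T ^ n) (((R t) ^ (m + 1)) a) + (T ^ n) (((R t) ^ (m + 1)) b) := by
        rw [hab, map_add, map_add]
      have h1a : ‖(T ^ (n + 1)) (((R t) ^ (m + 1)) a)‖ ≤ (1 + 3 * M) ^ (m + 1) * ‖a‖ := by
        rw [show n + 1 = 2 * (m + 1) by omega]
        exact main_even (m + 1) a
      have h1b : ‖(T ^ (n + 1)) (((R t) ^ (m + 1)) b)‖
          ≤ (1 + 3 * M) ^ (m + 1) * ((t ^ n)⁻¹ * ‖(T ^ n) b‖) := by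
        have e1 : ∀ w : X, (T ^ (n + 1)) w = T ((T ^ n) w) := by
          intro w; rw [pow_succ']; rfl
        have e2 : ((R t) ^ (m + 1)) ((T ^ n) b) = R t (((R t) ^ m) ((T ^ n) b)) := by
          rw [pow_succ']; rfl
        rw [e1, commPowR n (m + 1) b hb, e2]
        calc ‖T (R t (((R t) ^ m) ((T ^ n) b)))‖
            ≤ M / t * ‖((R t) ^ m) ((T ^ n) b)‖ := hR2 t ht _
          _ ≤ M / t * ((M / t ^ 2) ^ m * ‖(T ^ n) b‖) :=
              mul_le_mul_of_nonneg_left (Rpow_bound m _) (by positivity)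
          _ ≤ (1 + 3 * M) ^ (m + 1) * ((t ^ n)⁻¹ * ‖(T ^ n) b‖) := by
              have key : M / t * ((M / t ^ 2) ^ m * ‖(T ^ n) b‖)
                  = M ^ (m + 1) * ((t ^ n)⁻¹ * ‖(T ^ n) b‖) := by
                rw [hm, div_pow]
                field_simp
                ring
              rw [key]
              exact mul_le_mul_of_nonneg_right (pow_le_pow_left₀ hM hMle (m + 1))
                (by positivity)
      have h2a : t * ‖(T ^ n) (((R t) ^ (m + 1)) a)‖ ≤ (1 + 3 * M) ^ (m + 1) * ‖a‖ := by
        have hmo := main_odd m a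
        rw [show 2 * m + 1 = n by omega] at hmo
        calc t * ‖(T ^ n) (((R t) ^ (m + 1)) a)‖
            ≤ t * ((1 + 3 * M) ^ m * (M / t * ‖a‖)) :=
            mul_le_mul_of_nonneg_left hmo ht.le
          _ = M * ((1 + 3 * M) ^ m * ‖a‖) := by field_simp
          _ ≤ (1 + 3 * M) * ((1 + 3 * M) ^ m * ‖a‖) :=
            mul_le_mul_of_nonneg_right hMle (by positivity)
          _ = (1 + 3 * M) ^ (m + 1) * ‖a‖ := by ring
      have h2b : t * ‖(T ^ n) (((R t) ^ (m + 1)) b)‖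
          ≤ (1 + 3 * M) ^ (m + 1) * ((t ^ n)⁻¹ * ‖(T ^ n) b‖) := by
        rw [commPowR n (m + 1) b hb]
        calc t * ‖((R t) ^ (m + 1)) ((T ^ n) b)‖
            ≤ t * ((M / t ^ 2) ^ (m + 1) * ‖(T ^ n) b‖) :=
            mul_le_mul_of_nonneg_left (Rpow_bound (m + 1) _) ht.le
          _ = M ^ (m + 1) * ((t ^ n)⁻¹ * ‖(T ^ n) b‖) := by
              rw [hm, div_pow]; field_simp; ring
          _ ≤ (1 + 3 * M) ^ (m + 1) * ((t ^ n)⁻¹ * ‖(T ^ n) b‖) :=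
            mul_le_mul_of_nonneg_right (pow_le_pow_left₀ hM hMle (m + 1)) (by positivity)
      calc ‖(T ^ (n + 1)) (((R t) ^ (m + 1)) x)‖ + t * ‖(T ^ n) (((R t) ^ (m + 1)) x)‖
          ≤ (‖(T ^ (n + 1)) (((R t) ^ (m + 1)) a)‖ + ‖(T ^ (n + 1)) (((R t) ^ (m + 1)) b)‖)
            + t * (‖(T ^ n) (((R t) ^ (m + 1)) a)‖ + ‖(T ^ n) (((R t) ^ (m + 1)) b)‖) := by
            refine add_le_add ?_ ?_
            · rw [hsplit1]; exact norm_add_le _ _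
            · exact mul_le_mul_of_nonneg_left (by rw [hsplit2]; exact norm_add_le _ _) ht.le
        _ = (‖(T ^ (n + 1)) (((R t) ^ (m + 1)) a)‖ + ‖(T ^ (n + 1)) (((R t) ^ (m + 1)) b)‖)
            + (t * ‖(T ^ n) (((R t) ^ (m + 1)) a)‖ + t * ‖(T ^ n) (((R t) ^ (m + 1)) b)‖) := by
            ring
        _ ≤ ((1 + 3 * M) ^ (m + 1) * ‖a‖ + (1 + 3 * M) ^ (m + 1) * ((t ^ n)⁻¹ * ‖(T ^ n) b‖))
            + ((1 + 3 * M) ^ (m + 1) * ‖a‖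
              + (1 + 3 * M) ^ (m + 1) * ((t ^ n)⁻¹ * ‖(T ^ n) b‖)) :=
            add_le_add (add_le_add h1a h1b) (add_le_add h2a h2b)
        _ ≤ 2 * (1 + 3 * M) ^ (m + 1) * (‖a‖ + (t ^ n)⁻¹ * (‖b‖ + ‖(T ^ n) b‖)) := by
            nlinarith [mul_nonneg (mul_nonneg (pow_nonneg h3M (m + 1))
              (inv_nonneg.mpr htn.le)) (norm_nonneg b)]
  -- conclude by taking the infimum
  have hC : (0:ℝ) < 2 * (1 + 3 * M) ^ ((n + 1) / 2) := by positivity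
  have τdef : t ^ (-(n:ℝ)) = (t ^ n)⁻¹ := by
    rw [Real.rpow_neg ht.le, Real.rpow_natCast]
  unfold KX
  have hne : {r : ℝ | ∃ a b, x = a + b ∧ b ∈ domN T (D : Set X) n ∧
      r = ‖a‖ + t ^ (-(n:ℝ)) * (‖b‖ + ‖(T ^ n) b‖)}.Nonempty := by
    refine ⟨‖x‖ + t ^ (-(n:ℝ)) * (‖(0:X)‖ + ‖(T ^ n) (0:X)‖), x, 0, by simp, ?_, rfl⟩
    simp only [domN, Set.mem_setOf_eq]
    intro j hj
    simp
  have hlow : psi T R n x t / (2 * (1 + 3 * M) ^ ((n + 1) / 2)) ≤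
      sInf {r : ℝ | ∃ a b, x = a + b ∧ b ∈ domN T (D : Set X) n ∧
      r = ‖a‖ + t ^ (-(n:ℝ)) * (‖b‖ + ‖(T ^ n) b‖)} := by
    apply le_csInf hne
    rintro r ⟨a, b, hab, hb, rfl⟩
    rw [div_le_iff₀ hC]
    calc psi T R n x t
        ≤ 2 * (1 + 3 * M) ^ ((n + 1) / 2) * (‖a‖ + (t ^ n)⁻¹ * (‖b‖ + ‖(T ^ n) b‖)) :=
          core a b hab hb
      _ = (‖a‖ + t ^ (-(n:ℝ)) * (‖b‖ + ‖(T ^ n) b‖)) * (2 * (1 + 3 * M) ^ ((n + 1) / 2)) := by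
          rw [τdef]; ring
  rw [div_le_iff₀ hC] at hlow
  linarith
end
end

section
/- Let T ∈ B(X) be a bounded right linear operator on a quaternionic right Banach space and s ∈ ℍ with |s| > ‖T‖. Then the series Σ_{n=0}^∞ Tⁿ s^{−n−1} converges in operator norm and equals (T² − 2Re(s)T + |s|²)^{-1}(conj(s) − T). -/
noncomputable section

open MulOpposite

local notation "ℍ" => Quaternion ℝ


section Aux

variable {X : Type*} [NormedAddCommGroup X] [NormedSpace ℝ X]
  [Module ℍᵐᵒᵖ X] [SMulCommClass ℍᵐᵒᵖ ℝ X]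

/-- Right multiplication by a quaternion as a continuous real-linear map. -/
def rmulQ (hnorm : ∀ (x : X) (s : ℍ), ‖(op s) • x‖ = ‖x‖ * ‖s‖) (t : ℍ) : X →L[ℝ] X :=
  AddMonoidHom.toRealLinearMap
    { toFun := fun x => (op t) • x
      map_zero' := smul_zero _
      map_add' := fun x y => smul_add _ x y }
    (by
      refine (LipschitzWith.of_dist_le_mul (K := ‖t‖₊) ?_).continuous
      intro x y
      simp only [AddMonoidHom.coe_mk, ZeroHom.coe_mk, dist_eq_norm, ← smul_sub]
      rw [hnorm, coe_nnnorm, mul_comm])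

@[simp] lemma rmulQ_apply (hnorm : ∀ (x : X) (s : ℍ), ‖(op s) • x‖ = ‖x‖ * ‖s‖)
    (t : ℍ) (x : X) : rmulQ hnorm t x = (op t) • x := rfl

lemma rmulQ_pow_apply (hnorm : ∀ (x : X) (s : ℍ), ‖(op s) • x‖ = ‖x‖ * ‖s‖)
    (t : ℍ) (k : ℕ) (x : X) : ((rmulQ hnorm t) ^ k) x = (op (t ^ k)) • x := by
  induction k generalizing x with
  | zero => simp
  | succ k ih =>
    rw [pow_succ, ContinuousLinearMap.mul_apply, rmulQ_apply, ih, smul_smul, ← op_mul,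
      ← pow_succ']

lemma op_coe_smul (hnorm : ∀ (x : X) (s : ℍ), ‖(op s) • x‖ = ‖x‖ * ‖s‖)
    (r : ℝ) (x : X) : (op ((r : ℍ))) • x = r • x := by
  set g : ℝ →+ X :=
    { toFun := fun r => (op ((r : ℍ))) • x
      map_zero' := by
        simp only [Quaternion.coe_zero, op_zero, zero_smul]
      map_add' := fun a b => by
        simp only [Quaternion.coe_add, op_add, add_smul] }
  have hg : Continuous g := by
    refine (LipschitzWith.of_dist_le_mul (K := ‖x‖₊) ?_).continuous
    intro a b
    have : g a - g b = (op (((a - b : ℝ) : ℍ))) • x := by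
      simp only [g, AddMonoidHom.coe_mk, ZeroHom.coe_mk, Quaternion.coe_sub, op_sub, sub_smul]
    rw [dist_eq_norm, this, hnorm, Quaternion.norm_coe, coe_nnnorm, Real.dist_eq,
      Real.norm_eq_abs, mul_comm]
  have h1 : (op ((r : ℍ))) • x = (g.toRealLinearMap hg) r := rfl
  rw [h1, show r = r • (1 : ℝ) by rw [smul_eq_mul, mul_one], map_smul]
  have : (g.toRealLinearMap hg) (1 : ℝ) = (op (((1:ℝ) : ℍ))) • x := rfl
  rw [this]
  norm_num

end Aux
section Key

open Filter Topology

variable {X : Type*} [NormedAddCommGroup X] [NormedSpace ℝ X] [CompleteSpace X]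
  [Module ℍᵐᵒᵖ X] [SMulCommClass ℍᵐᵒᵖ ℝ X]

lemma key_inverse (hnorm : ∀ (x : X) (s : ℍ), ‖(op s) • x‖ = ‖x‖ * ‖s‖)
    (T' : X →L[ℝ] X)
    (hcomm : ∀ (a : ℍ) (x : X), T' ((op a) • x) = (op a) • T' x)
    {c : ℝ} (hc : 0 ≤ c) (hTb : ∀ x : X, ‖T' x‖ ≤ c * ‖x‖) {t : ℍ} (hct : c < ‖t‖) :
    ∃ S : X →L[ℝ] X,
      HasSum (fun n : ℕ => T' ^ n * (rmulQ hnorm t⁻¹) ^ (n + 1)) S ∧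
      (rmulQ hnorm t - T') * S = 1 ∧ S * (rmulQ hnorm t - T') = 1 := by
  set M : X →L[ℝ] X := rmulQ hnorm t with hM
  set Minv : X →L[ℝ] X := rmulQ hnorm t⁻¹ with hMinv
  have htpos : (0:ℝ) < ‖t‖ := lt_of_le_of_lt hc hct
  have ht0 : t ≠ 0 := by
    intro h; rw [h, norm_zero] at htpos; exact lt_irrefl _ htpos
  have hMinvM : Minv * M = 1 := by
    ext x
    simp only [ContinuousLinearMap.mul_apply, hM, hMinv, rmulQ_apply,
      ContinuousLinearMap.one_apply, smul_smul, ← op_mul, mul_inv_cancel₀ ht0, op_one, one_smul]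
  have hMMinv : M * Minv = 1 := by
    ext x
    simp only [ContinuousLinearMap.mul_apply, hM, hMinv, rmulQ_apply,
      ContinuousLinearMap.one_apply, smul_smul, ← op_mul, inv_mul_cancel₀ ht0, op_one, one_smul]
  have cTM : Commute T' M := by
    ext x
    simp only [ContinuousLinearMap.mul_apply, hM, rmulQ_apply, hcomm]
  have cTMinv : Commute T' Minv := by
    ext x
    simp only [ContinuousLinearMap.mul_apply, hMinv, rmulQ_apply, hcomm]
  have hpowT : ∀ (n : ℕ) (x : X), ‖(T' ^ n) x‖ ≤ c ^ n * ‖x‖ := by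
    intro n
    induction n with
    | zero => intro x; simp
    | succ n ih =>
      intro x
      rw [pow_succ, ContinuousLinearMap.mul_apply]
      calc ‖(T' ^ n) (T' x)‖ ≤ c ^ n * ‖T' x‖ := ih _
        _ ≤ c ^ n * (c * ‖x‖) := by
            exact mul_le_mul_of_nonneg_left (hTb x) (pow_nonneg hc n)
        _ = c ^ (n + 1) * ‖x‖ := by ring
  set f : ℕ → (X →L[ℝ] X) := fun n => T' ^ n * Minv ^ (n + 1) with hf
  have hfapp : ∀ (n : ℕ) (x : X), f n x = (T' ^ n) ((op (t⁻¹ ^ (n+1))) • x) := by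
    intro n x
    simp only [hf, ContinuousLinearMap.mul_apply, hMinv, rmulQ_pow_apply]
  have hfnorm : ∀ n, ‖f n‖ ≤ ‖t‖⁻¹ * (c * ‖t‖⁻¹) ^ n := by
    intro n
    refine ContinuousLinearMap.opNorm_le_bound _ (by positivity) ?_
    intro x
    rw [hfapp]
    calc ‖(T' ^ n) ((op (t⁻¹ ^ (n+1))) • x)‖ ≤ c ^ n * ‖(op (t⁻¹ ^ (n+1))) • x‖ := hpowT n _
      _ = c ^ n * (‖x‖ * ‖t‖⁻¹ ^ (n+1)) := by rw [hnorm, norm_pow, norm_inv]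
      _ = ‖t‖⁻¹ * (c * ‖t‖⁻¹) ^ n * ‖x‖ := by rw [mul_pow]; ring
  have hr0 : (0:ℝ) ≤ c * ‖t‖⁻¹ := by positivity
  have hr1 : c * ‖t‖⁻¹ < 1 := by
    rw [← div_eq_mul_inv]
    exact (div_lt_one htpos).mpr hct
  have hsummable : Summable f :=
    Summable.of_norm_bounded ((summable_geometric_of_lt_one hr0 hr1).mul_left _) hfnorm
  obtain ⟨S, hS⟩ := hsummable
  refine ⟨S, hS, ?_, ?_⟩
  all_goals {
    set g : ℕ → (X →L[ℝ] X) := fun n => T' ^ n * Minv ^ n with hg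
    have hg0 : g 0 = 1 := by simp [hg]
    have hgnorm : ∀ n, ‖g n‖ ≤ (c * ‖t‖⁻¹) ^ n := by
      intro n
      refine ContinuousLinearMap.opNorm_le_bound _ (by positivity) ?_
      intro x
      have : g n x = (T' ^ n) ((op (t⁻¹ ^ n)) • x) := by
        simp only [hg, ContinuousLinearMap.mul_apply, hMinv, rmulQ_pow_apply]
      rw [this]
      calc ‖(T' ^ n) ((op (t⁻¹ ^ n)) • x)‖ ≤ c ^ n * ‖(op (t⁻¹ ^ n)) • x‖ := hpowT n _
        _ = c ^ n * (‖x‖ * ‖t‖⁻¹ ^ n) := by rw [hnorm, norm_pow, norm_inv]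
        _ = (c * ‖t‖⁻¹) ^ n * ‖x‖ := by rw [mul_pow]; ring
    have hgtend : Filter.Tendsto g Filter.atTop (nhds 0) :=
      squeeze_zero_norm hgnorm (tendsto_pow_atTop_nhds_zero_of_lt_one hr0 hr1)
    first
    | -- left inverse : (M - T') * S = 1
      (have hdiff : ∀ n, (M - T') * f n = g n - g (n + 1) := by
        intro n
        have e1 : M * f n = g n := by
          show M * (T' ^ n * Minv ^ (n+1)) = T' ^ n * Minv ^ n
          rw [pow_succ' Minv n, ← mul_assoc, (cTM.symm.pow_right n).eq, mul_assoc,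
            ← mul_assoc M, hMMinv, one_mul]
        have e2 : T' * f n = g (n + 1) := by
          show T' * (T' ^ n * Minv ^ (n+1)) = T' ^ (n+1) * Minv ^ (n+1)
          rw [← mul_assoc, ← pow_succ']
        rw [sub_mul, e1, e2]
       have h1 : HasSum (fun n => g n - g (n + 1)) ((M - T') * S) := by
        simpa only [hdiff] using hS.mul_left (M - T')
       have hps := h1.tendsto_sum_nat
       have hps2 : (fun k => ∑ n ∈ Finset.range k, (g n - g (n + 1))) = fun k => g 0 - g k :=
        funext fun k => Finset.sum_range_sub' g k
       rw [hps2] at hps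
       have hlim : Filter.Tendsto (fun k => g 0 - g k) Filter.atTop (nhds (g 0 - 0)) :=
        tendsto_const_nhds.sub hgtend
       have := tendsto_nhds_unique hps hlim
       rw [hg0, sub_zero] at this
       exact this)
    | -- right inverse : S * (M - T') = 1
      (have hdiff : ∀ n, f n * (M - T') = g n - g (n + 1) := by
        intro n
        have e1 : f n * M = g n := by
          show (T' ^ n * Minv ^ (n+1)) * M = T' ^ n * Minv ^ n
          rw [pow_succ Minv n, mul_assoc, mul_assoc, hMinvM, mul_one]
        have e2 : f n * T' = g (n + 1) := by
          show (T' ^ n * Minv ^ (n+1)) * T' = T' ^ (n+1) * Minv ^ (n+1)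
          rw [mul_assoc, ← (cTMinv.pow_right (n+1)).eq, ← mul_assoc, ← pow_succ]
        rw [mul_sub, e1, e2]
       have h1 : HasSum (fun n => g n - g (n + 1)) (S * (M - T')) := by
        simpa only [hdiff] using hS.mul_right (M - T')
       have hps := h1.tendsto_sum_nat
       have hps2 : (fun k => ∑ n ∈ Finset.range k, (g n - g (n + 1))) = fun k => g 0 - g k :=
        funext fun k => Finset.sum_range_sub' g k
       rw [hps2] at hps
       have hlim : Filter.Tendsto (fun k => g 0 - g k) Filter.atTop (nhds (g 0 - 0)) :=
        tendsto_const_nhds.sub hgtend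
       have := tendsto_nhds_unique hps hlim
       rw [hg0, sub_zero] at this
       exact this)
  }

end Key
/-- for a bounded right linear operator `T` and `s ∈ ℍ` with `|s| > ‖T‖`,
the series `Σ Tⁿ s^{-n-1}` converges (pointwise and in operator norm) to
`(T² − 2Re(s)T + |s|²)⁻¹ (conj(s) − T)`. -/
theorem sResolvent_series
    {X : Type*} [NormedAddCommGroup X] [NormedSpace ℝ X] [CompleteSpace X]
    [Module ℍᵐᵒᵖ X] [SMulCommClass ℍᵐᵒᵖ ℝ X]
    (hnorm : ∀ (x : X) (s : ℍ), ‖(op s) • x‖ = ‖x‖ * ‖s‖)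
    (T : Module.End ℍᵐᵒᵖ X) (hTcont : Continuous T)
    (s : ℍ) (c : ℝ) (hc : 0 ≤ c) (hTb : ∀ x : X, ‖T x‖ ≤ c * ‖x‖) (hcs : c < ‖s‖) :
    ∃ Rs : Module.End ℍᵐᵒᵖ X, Continuous Rs ∧
      (∀ x : X, Qs T s (Rs x) = x) ∧ (∀ x : X, Rs (Qs T s x) = x) ∧
      (∀ x : X, HasSum (fun n : ℕ => (op (s⁻¹ ^ (n + 1))) • ((T ^ n) x))
        (Rs ((op (star s)) • x - T x))) ∧
      ∀ ε > (0:ℝ), ∃ N : ℕ, ∀ k ≥ N, ∀ x : X,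
        ‖(∑ n ∈ Finset.range k, (op (s⁻¹ ^ (n + 1))) • ((T ^ n) x))
            - Rs ((op (star s)) • x - T x)‖ ≤ ε * ‖x‖ := by
  classical
  set T' : X →L[ℝ] X := AddMonoidHom.toRealLinearMap T.toAddMonoidHom hTcont with hT'
  have hT'x : ∀ x : X, T' x = T x := fun _ => rfl
  have hcomm : ∀ (a : ℍ) (x : X), T' ((op a) • x) = (op a) • T' x := fun a x =>
    T.map_smul (op a) x
  have hT'b : ∀ x : X, ‖T' x‖ ≤ c * ‖x‖ := hTb
  have hT'pow : ∀ (n : ℕ) (x : X), (T' ^ n) x = (T ^ n) x := by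
    intro n
    induction n with
    | zero => intro x; rfl
    | succ n ih =>
      intro x
      rw [pow_succ, pow_succ, ContinuousLinearMap.mul_apply, Module.End.mul_apply, ← hT'x, ih]
  obtain ⟨S, hS, hMS, hSM⟩ := key_inverse hnorm T' hcomm hc hT'b hcs
  obtain ⟨Sb, hSb, hMbSb, hSbMb⟩ :=
    key_inverse hnorm T' hcomm hc hT'b (t := star s) (by rwa [Quaternion.norm_star])
  set M : X →L[ℝ] X := rmulQ hnorm s with hM
  set Mb : X →L[ℝ] X := rmulQ hnorm (star s) with hMb
  set Minv : X →L[ℝ] X := rmulQ hnorm s⁻¹ with hMinv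
  set Q' : X →L[ℝ] X := (M - T') * (Mb - T') with hQ'
  have hQ'x : ∀ x : X, Q' x = Qs T s x := by
    intro x
    have hMMb : M (Mb x) = (‖s‖ ^ 2 : ℝ) • x := by
      simp only [hM, hMb, rmulQ_apply, smul_smul, ← op_mul, Quaternion.star_mul_self]
      rw [op_coe_smul hnorm]
      congr 1
      rw [Quaternion.normSq_eq_norm_mul_self, sq]
    have hmid : M (T' x) + T' (Mb x) = (2 * s.re) • T' x := by
      simp only [hM, hMb, rmulQ_apply, hcomm]
      rw [← add_smul, ← op_add, Quaternion.self_add_star', op_coe_smul hnorm]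
    have hsq : T' (T' x) = (T ^ 2) x := by
      rw [← hT'pow 2 x, pow_two, ContinuousLinearMap.mul_apply]
    have hlhs : Q' x = M (Mb x) - (M (T' x) + T' (Mb x)) + T' (T' x) := by
      simp only [hQ', ContinuousLinearMap.mul_apply, ContinuousLinearMap.sub_apply, map_sub]
      abel
    rw [hlhs, hMMb, hmid, hsq, hT'x]
    simp only [Qs, LinearMap.add_apply, LinearMap.sub_apply, LinearMap.smul_apply,
      Module.End.one_apply]
    abel
  set R : X →L[ℝ] X := Sb * S with hR
  have hQR : Q' * R = 1 := by
    rw [hQ', hR, mul_assoc, ← mul_assoc (Mb - T'), hMbSb, one_mul, hMS]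
  have hRQ : R * Q' = 1 := by
    rw [hQ', hR, mul_assoc, ← mul_assoc S, hSM, one_mul, hSbMb]
  have hQRx : ∀ x : X, Q' (R x) = x := by
    intro x
    have := congrFun (congrArg DFunLike.coe hQR) x
    simpa only [ContinuousLinearMap.mul_apply, ContinuousLinearMap.one_apply] using this
  have hRQx : ∀ x : X, R (Q' x) = x := by
    intro x
    have := congrFun (congrArg DFunLike.coe hRQ) x
    simpa only [ContinuousLinearMap.mul_apply, ContinuousLinearMap.one_apply] using this
  -- commutation of (Mb - T') with S
  have c1 : Commute Mb T' := by
    ext x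
    simp only [ContinuousLinearMap.mul_apply, hMb, rmulQ_apply, hcomm]
  have c2 : Commute Mb Minv := by
    ext x
    have hq : Commute (star s) s⁻¹ := by
      have h0 : Commute (star s) s :=
        (Quaternion.star_mul_self s).trans (Quaternion.self_mul_star s).symm
      exact h0.inv_right₀
    simp only [ContinuousLinearMap.mul_apply, hMb, hMinv, rmulQ_apply, smul_smul, ← op_mul]
    rw [hq.eq]
  have cTMinv : Commute T' Minv := by
    ext x
    simp only [ContinuousLinearMap.mul_apply, hMinv, rmulQ_apply, hcomm]
  have ccomm : ∀ n : ℕ, Commute (Mb - T') (T' ^ n * Minv ^ (n + 1)) := fun n =>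
    Commute.mul_right
      ((Commute.sub_left c1 (Commute.refl T')).pow_right n)
      ((Commute.sub_left c2 cTMinv).pow_right (n + 1))
  have hcommS : (Mb - T') * S = S * (Mb - T') := by
    have h1 := hS.mul_left (Mb - T')
    have h2 := hS.mul_right (Mb - T')
    have h3 : ∀ n : ℕ, (T' ^ n * Minv ^ (n+1)) * (Mb - T') = (Mb - T') * (T' ^ n * Minv ^ (n+1)) :=
      fun n => ((ccomm n).eq).symm
    simp only [h3] at h2
    exact h1.unique h2
  have hSR : S = R * (Mb - T') := by
    calc S = (Sb * (Mb - T')) * S := by rw [hSbMb, one_mul]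
      _ = Sb * ((Mb - T') * S) := mul_assoc _ _ _
      _ = Sb * (S * (Mb - T')) := by rw [hcommS]
      _ = (Sb * S) * (Mb - T') := (mul_assoc _ _ _).symm
  -- the endomorphism Rs
  have hinj : Function.Injective Q' := fun u v h => by rw [← hRQx u, ← hRQx v, h]
  set Rs : Module.End ℍᵐᵒᵖ X :=
    { toFun := R
      map_add' := fun x y => map_add R x y
      map_smul' := fun a x => by
        show R (a • x) = a • R x
        apply hinj
        rw [hQRx]
        have h1 : Q' (a • R x) = a • Q' (R x) := by
          rw [hQ'x, hQ'x]
          exact (Qs T s).map_smul a (R x)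
        rw [h1, hQRx] } with hRs
  have hRsx : ∀ x : X, Rs x = R x := fun _ => rfl
  have hval : ∀ x : X, Rs ((op (star s)) • x - T x) = S x := by
    intro x
    rw [hRsx, hSR]
    simp only [ContinuousLinearMap.mul_apply, ContinuousLinearMap.sub_apply, hMb, rmulQ_apply,
      hT'x]
  have hTpowcomm : ∀ (n : ℕ) (a : ℍ) (x : X),
      (T' ^ n) ((op a) • x) = (op a) • (T' ^ n) x := by
    intro n
    induction n with
    | zero => intro a x; rfl
    | succ n ih =>
      intro a x
      rw [pow_succ, ContinuousLinearMap.mul_apply, ContinuousLinearMap.mul_apply, hcomm, ih]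
  have hterm : ∀ (n : ℕ) (x : X),
      (op (s⁻¹ ^ (n + 1))) • ((T ^ n) x) = (T' ^ n * Minv ^ (n + 1)) x := by
    intro n x
    rw [ContinuousLinearMap.mul_apply, hMinv, rmulQ_pow_apply, hTpowcomm, hT'pow]
  refine ⟨Rs, ?_, ?_, ?_, ?_, ?_⟩
  · exact R.continuous
  · intro x
    rw [hRsx, ← hQ'x]
    exact hQRx x
  · intro x
    rw [hRsx, ← hQ'x]
    exact hRQx x
  · intro x
    rw [hval]
    have h := hS.mapL (ContinuousLinearMap.apply ℝ X x)
    simp only [ContinuousLinearMap.apply_apply] at h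
    simpa only [hterm] using h
  · intro ε hε
    have htend := hS.tendsto_sum_nat
    rw [Metric.tendsto_atTop] at htend
    obtain ⟨N, hN⟩ := htend ε hε
    refine ⟨N, fun k hk x => ?_⟩
    have hPk : (∑ n ∈ Finset.range k, (op (s⁻¹ ^ (n + 1))) • ((T ^ n) x))
        = (∑ n ∈ Finset.range k, T' ^ n * Minv ^ (n + 1)) x := by
      rw [ContinuousLinearMap.sum_apply]
      exact Finset.sum_congr rfl fun n _ => hterm n x
    rw [hPk, hval]
    have h1 : ‖(∑ n ∈ Finset.range k, T' ^ n * Minv ^ (n + 1)) x - S x‖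
        ≤ ‖(∑ n ∈ Finset.range k, T' ^ n * Minv ^ (n + 1)) - S‖ * ‖x‖ := by
      rw [← ContinuousLinearMap.sub_apply]
      exact ContinuousLinearMap.le_opNorm _ x
    refine h1.trans ?_
    have h2 := hN k hk
    rw [dist_eq_norm] at h2
    exact mul_le_mul_of_nonneg_right h2.le (norm_nonneg x)
end
end
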